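/- arXiv:1401.6516 — 12 statements merged into one kernel-verified Lean document; each statement's English description precedes it below -/
import Mathlib

section
/- Let n ≥ k ≥ 1 and let X be an (n,k) right Gog trapezoid. Define the array X̂ of size n by X̂_{i,j} = X_{i,j} for indices in the trapezoid (i−j ≤ k−1) and X̂_{i,j} = j for n ≥ i ≥ j+k. Then X̂ is a Gog triangle of size n, and it is the minimal Gog triangle extending X: for every Gog triangle Y of size n whose restriction to the indices with i−j ≤ k−1 equals X, one has X̂_{i,j} ≤ Y_{i,j} for all n ≥ i ≥ j ≥ 1. -/
/-- A Gelfand-Tsetlin triangle of size `n`: a triangular array of positive integers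
`X i j` for `n ≥ i ≥ j ≥ 1` with `X (i+1) j ≤ X i j ≤ X (i+1) (j+1)`. -/
def IsGT (n : ℕ) (X : ℕ → ℕ → ℤ) : Prop :=
  (∀ i j, 1 ≤ j → j ≤ i → i ≤ n → 1 ≤ X i j) ∧
  (∀ i j, 1 ≤ j → j ≤ i → i + 1 ≤ n → X (i+1) j ≤ X i j ∧ X i j ≤ X (i+1) (j+1))

/-- A Gog triangle of size `n`: a Gelfand-Tsetlin triangle with strictly increasing
rows and top row `X n j = j`. -/
def IsGog (n : ℕ) (X : ℕ → ℕ → ℤ) : Prop :=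
  IsGT n X ∧
  (∀ i j, 1 ≤ j → j + 1 ≤ i → i ≤ n → X i j < X i (j+1)) ∧
  (∀ j, 1 ≤ j → j ≤ n → X n j = (j : ℤ))

/-- A Magog triangle of size `n`. -/
def IsMagog (n : ℕ) (X : ℕ → ℕ → ℤ) : Prop :=
  IsGT n X ∧ ∀ j, 1 ≤ j → j ≤ n → X j j ≤ (j : ℤ)

/-- A GOGAm triangle of size `n`, characterized by the family of inequalities. -/
def IsGogam (n : ℕ) (X : ℕ → ℕ → ℤ) : Prop :=
  IsGT n X ∧ X n n ≤ (n : ℤ) ∧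
  ∀ k : ℕ, 1 ≤ k → k ≤ n - 1 →
    ∀ j : ℕ → ℕ, j 0 = n → (∀ i, i < n - k → j (i+1) < j i) → 1 ≤ j (n - k) →
      (∑ i ∈ Finset.range (n - k),
        (X (j i + i) (j i) - X (j (i+1) + i) (j (i+1))))
        + X (j (n-k) + (n-k)) (j (n-k)) ≤ (k : ℤ)

/-- The number of inversions of `X` (pairs `(i,j)` with `X i j = X (i+1) j`). -/
noncomputable def invCount (n : ℕ) (X : ℕ → ℕ → ℤ) : ℕ :=
  Set.ncard {p : ℕ × ℕ | 1 ≤ p.2 ∧ p.2 ≤ p.1 ∧ p.1 + 1 ≤ n ∧ X p.1 p.2 = X (p.1+1) p.2}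

/-- The number of coinversions of `X` (pairs `(i,j)` with `X i j = X (i+1) (j+1)`). -/
noncomputable def coinvCount (n : ℕ) (X : ℕ → ℕ → ℤ) : ℕ :=
  Set.ncard {p : ℕ × ℕ | 1 ≤ p.2 ∧ p.2 ≤ p.1 ∧ p.1 + 1 ≤ n ∧ X p.1 p.2 = X (p.1+1) (p.2+1)}


lemma gog_ge (n : ℕ) (Y : ℕ → ℕ → ℤ) (hY : IsGog n Y) :
    ∀ j i, 1 ≤ j → j ≤ i → i ≤ n → (j : ℤ) ≤ Y i j := by
  intro j
  induction j with
  | zero => intro i h; omega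
  | succ j ih =>
    intro i h1 h2 h3
    rcases Nat.eq_zero_or_pos j with hj | hj
    · subst hj
      simpa using hY.1.1 i 1 le_rfl (by omega) h3
    · have h4 : (j : ℤ) ≤ Y i j := ih i hj (by omega) h3
      have h5 := hY.2.1 i j hj (by omega) h3
      push_cast
      omega

/-- Minimal completion of an `(n,k)` right Gog trapezoid: filling with `j`'s gives the
smallest Gog triangle of size `n` extending it. -/
theorem stmt0 (n k : ℕ) (hk1 : 1 ≤ k) (hkn : k ≤ n) (X : ℕ → ℕ → ℤ)
    (hX : ∃ Y : ℕ → ℕ → ℤ, IsGog n Y ∧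
      ∀ i j, 1 ≤ j → j ≤ i → i ≤ n → i < j + k → X i j = Y i j) :
    IsGog n (fun i j => if i < j + k then X i j else (j : ℤ)) ∧
    ∀ Y : ℕ → ℕ → ℤ, IsGog n Y →
      (∀ i j, 1 ≤ j → j ≤ i → i ≤ n → i < j + k → Y i j = X i j) →
      ∀ i j, 1 ≤ j → j ≤ i → i ≤ n →
        (if i < j + k then X i j else (j : ℤ)) ≤ Y i j := by
  obtain ⟨Y, hY, hXY⟩ := hX
  have hge := gog_ge n Y hY
  constructor
  · refine ⟨⟨?_, ?_⟩, ?_, ?_⟩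
    · intro i j h1 h2 h3
      dsimp only
      by_cases h : i < j + k
      · rw [if_pos h, hXY i j h1 h2 h3 h]
        exact hY.1.1 i j h1 h2 h3
      · rw [if_neg h]; exact_mod_cast h1
    · intro i j h1 h2 h3
      dsimp only
      by_cases h : i < j + k
      · have e1 : X i j = Y i j := hXY i j h1 h2 (by omega) h
        have e3 : i + 1 < (j + 1) + k := by omega
        have e4 : X (i+1) (j+1) = Y (i+1) (j+1) :=
          hXY (i+1) (j+1) (by omega) (by omega) h3 e3
        have hgt := hY.1.2 i j h1 h2 h3
        constructor
        · by_cases h' : i + 1 < j + k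
          · rw [if_pos h, if_pos h', e1, hXY (i+1) j h1 (by omega) h3 h']
            exact hgt.1
          · rw [if_pos h, if_neg h', e1]
            exact hge j i h1 h2 (by omega)
        · rw [if_pos h, if_pos e3, e1, e4]
          exact hgt.2
      · have h' : ¬ i + 1 < j + k := by omega
        have h'' : ¬ i + 1 < (j + 1) + k := by omega
        rw [if_neg h, if_neg h', if_neg h'']
        constructor
        · exact le_rfl
        · exact_mod_cast Nat.le_succ j
    · intro i j h1 h2 h3
      dsimp only
      by_cases h : i < j + k
      · have h' : i < (j + 1) + k := by omega
        rw [if_pos h, if_pos h', hXY i j h1 (by omega) h3 h,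
          hXY i (j+1) (by omega) h2 h3 h']
        exact hY.2.1 i j h1 h2 h3
      · rw [if_neg h]
        by_cases h' : i < (j + 1) + k
        · rw [if_pos h', hXY i (j+1) (by omega) h2 h3 h']
          have := hge (j+1) i (by omega) h2 h3
          push_cast at this ⊢
          omega
        · rw [if_neg h']
          exact_mod_cast Nat.lt_succ_self j
    · intro j h1 h2
      dsimp only
      by_cases h : n < j + k
      · rw [if_pos h, hXY n j h1 h2 le_rfl h]
        exact hY.2.2 j h1 h2
      · rw [if_neg h]
  · intro W hW hWX i j h1 h2 h3
    by_cases h : i < j + k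
    · rw [if_pos h, ← hWX i j h1 h2 h3 h]
    · rw [if_neg h]
      exact gog_ge n W hW j i h1 h2 h3
end

section
/- Let n ≥ k ≥ 1 and let X be an (n,k) left Gog trapezoid. Define the array X̂ of size n by X̂_{i,j} = X_{i,j} for j ≤ k and, for n ≥ i ≥ j > k, X̂_{i,j} = max(X_{i,k}+j−k, X_{i−1,k}+j−k−1, …, X_{i−j+k,k}) = max_{0 ≤ t ≤ j−k} (X_{i−t,k} + j−k−t). Then X̂ is a Gog triangle of size n, and it is the minimal Gog triangle extending X: for every Gog triangle Y of size n whose restriction to the indices with j ≤ k equals X, one has X̂_{i,j} ≤ Y_{i,j} for all n ≥ i ≥ j ≥ 1. -/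
lemma gt_diag {n : ℕ} {Y : ℕ → ℕ → ℤ} (h : IsGT n Y) :
    ∀ s a b, 1 ≤ b → b ≤ a → a + s ≤ n → Y a b ≤ Y (a + s) (b + s) := by
  intro s
  induction s with
  | zero => simp
  | succ s ih =>
    intro a b hb hba han
    calc Y a b ≤ Y (a + s) (b + s) := ih a b hb hba (by omega)
    _ ≤ Y (a + s + 1) (b + s + 1) :=
        (h.2 (a + s) (b + s) (by omega) (by omega) (by omega)).2

lemma gog_row {n : ℕ} {Y : ℕ → ℕ → ℤ} (h : IsGog n Y) (i b : ℕ) (hb : 1 ≤ b)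
    (hin : i ≤ n) : ∀ c, b ≤ c → c ≤ i → Y i b + ((c - b : ℕ) : ℤ) ≤ Y i c := by
  intro c
  induction c with
  | zero => intro h1 _; omega
  | succ c ih =>
    intro hbc hci
    rcases Nat.eq_or_lt_of_le hbc with he | hl
    · rw [← he]; simp
    · have h1 : b ≤ c := by omega
      have h2 := ih h1 (by omega)
      have h3 : Y i c < Y i (c + 1) := h.2.1 i c (by omega) (by omega) hin
      omega

/-- Minimal completion of an `(n,k)` left Gog trapezoid: for `j > k` the entry is
`max_{0 ≤ t ≤ j-k} (X (i-t) k + (j-k-t))`; this gives the smallest Gog triangle of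
size `n` extending the trapezoid. -/
theorem stmt1 (n k : ℕ) (hk1 : 1 ≤ k) (hkn : k ≤ n) (X : ℕ → ℕ → ℤ)
    (hX : ∃ Y : ℕ → ℕ → ℤ, IsGog n Y ∧
      ∀ i j, 1 ≤ j → j ≤ i → i ≤ n → j ≤ k → X i j = Y i j)
    (Xhat : ℕ → ℕ → ℤ)
    (hXhat1 : ∀ i j, 1 ≤ j → j ≤ i → i ≤ n → j ≤ k → Xhat i j = X i j)
    (hXhat2 : ∀ i j, 1 ≤ j → j ≤ i → i ≤ n → k < j →
      Xhat i j = Finset.sup' (Finset.range (j - k + 1)) Finset.nonempty_range_add_one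
        (fun t => X (i - t) k + ((j - k - t : ℕ) : ℤ))) :
    IsGog n Xhat ∧
    ∀ Y : ℕ → ℕ → ℤ, IsGog n Y →
      (∀ i j, 1 ≤ j → j ≤ i → i ≤ n → j ≤ k → Y i j = X i j) →
      ∀ i j, 1 ≤ j → j ≤ i → i ≤ n → Xhat i j ≤ Y i j := by
  obtain ⟨Y₀, hY₀g, hY₀⟩ := hX
  -- each term of the sup is ≤ Y i j for any Gog extension Y
  have hterm : ∀ Y : ℕ → ℕ → ℤ, IsGog n Y →
      (∀ i j, 1 ≤ j → j ≤ i → i ≤ n → j ≤ k → X i j = Y i j) →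
      ∀ i j t, 1 ≤ j → j ≤ i → i ≤ n → k < j → t ≤ j - k →
        X (i - t) k + ((j - k - t : ℕ) : ℤ) ≤ Y i j := by
    intro Y hY hYX i j t _ hji hin hkj htk
    have h1 : X (i - t) k = Y (i - t) k :=
      hYX (i - t) k hk1 (by omega) (by omega) le_rfl
    have h2 : Y (i - t) k ≤ Y (i - t + t) (k + t) :=
      gt_diag hY.1 t (i - t) k hk1 (by omega) (by omega)
    rw [show i - t + t = i by omega] at h2
    have h3 : Y i (k + t) + ((j - (k + t) : ℕ) : ℤ) ≤ Y i j :=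
      gog_row hY i (k + t) (by omega) hin j (by omega) hji
    have h4 : ((j - (k + t) : ℕ) : ℤ) = ((j - k - t : ℕ) : ℤ) := by omega
    omega
  have hY₀X : ∀ i j, 1 ≤ j → j ≤ i → i ≤ n → j ≤ k → X i j = Y₀ i j := hY₀
  -- upper bound of Xhat by any Gog extension
  have hmin : ∀ Y : ℕ → ℕ → ℤ, IsGog n Y →
      (∀ i j, 1 ≤ j → j ≤ i → i ≤ n → j ≤ k → X i j = Y i j) →
      ∀ i j, 1 ≤ j → j ≤ i → i ≤ n → Xhat i j ≤ Y i j := by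
    intro Y hY hYX i j hj hji hin
    by_cases hjk : j ≤ k
    · rw [hXhat1 i j hj hji hin hjk, hYX i j hj hji hin hjk]
    · rw [hXhat2 i j hj hji hin (by omega)]
      apply Finset.sup'_le
      intro t ht
      rw [Finset.mem_range] at ht
      exact hterm Y hY hYX i j t hj hji hin (by omega) (by omega)
  -- lower bound: t = 0 term
  have hlow : ∀ i j, 1 ≤ j → j ≤ i → i ≤ n → k < j →
      X i k + ((j - k : ℕ) : ℤ) ≤ Xhat i j := by
    intro i j hj hji hin hkj
    rw [hXhat2 i j hj hji hin hkj]
    have h0 : (0 : ℕ) ∈ Finset.range (j - k + 1) := by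
      rw [Finset.mem_range]; omega
    have := Finset.le_sup' (fun t => X (i - t) k + ((j - k - t : ℕ) : ℤ) : ℕ → ℤ) h0
    simpa only [Nat.sub_zero] using this
  have hXeq : ∀ i, k ≤ i → i ≤ n → X i k = Y₀ i k := fun i h1 h2 =>
    hY₀X i k hk1 h1 h2 le_rfl
  constructor
  · refine ⟨⟨?_, ?_⟩, ?_, ?_⟩
    · -- positivity
      intro i j hj hji hin
      by_cases hjk : j ≤ k
      · rw [hXhat1 i j hj hji hin hjk, hY₀X i j hj hji hin hjk]
        exact hY₀g.1.1 i j hj hji hin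
      · have h1 : 1 ≤ Y₀ i k := hY₀g.1.1 i k hk1 (by omega) hin
        have h2 := hlow i j hj hji hin (by omega)
        have h3 := hXeq i (by omega) hin
        omega
    · -- GT inequalities
      intro i j hj hji hin
      constructor
      · -- Xhat (i+1) j ≤ Xhat i j
        by_cases hjk : j ≤ k
        · rw [hXhat1 (i+1) j hj (by omega) hin hjk, hXhat1 i j hj hji (by omega) hjk,
            hY₀X (i+1) j hj (by omega) hin hjk, hY₀X i j hj hji (by omega) hjk]
          exact (hY₀g.1.2 i j hj hji hin).1
        · have hkj : k < j := by omega
          rw [hXhat2 (i+1) j hj (by omega) hin hkj,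
            hXhat2 i j hj hji (by omega) hkj]
          apply Finset.sup'_le
          intro t ht
          rw [Finset.mem_range] at ht
          rcases Nat.eq_zero_or_pos t with rfl | htpos
          · have h1 : Y₀ (i+1) k ≤ Y₀ i k := (hY₀g.1.2 i k hk1 (by omega) hin).1
            have h2 : X (i+1) k = Y₀ (i+1) k := hXeq (i+1) (by omega) hin
            have h3 : X i k = Y₀ i k := hXeq i (by omega) (by omega)
            have h4 : (0 : ℕ) ∈ Finset.range (j - k + 1) := by
              rw [Finset.mem_range]; omega
            have h5 := Finset.le_sup'
              (fun t => X (i - t) k + ((j - k - t : ℕ) : ℤ) : ℕ → ℤ) h4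
            simp only [Nat.sub_zero] at h5 ⊢
            omega
          · have h4 : t - 1 ∈ Finset.range (j - k + 1) := by
              rw [Finset.mem_range]; omega
            have h5 := Finset.le_sup'
              (fun s => X (i - s) k + ((j - k - s : ℕ) : ℤ) : ℕ → ℤ) h4
            beta_reduce at h5 ⊢
            rw [show i + 1 - t = i - (t - 1) by omega]
            have h6 : ((j - k - t : ℕ) : ℤ) ≤ ((j - k - (t - 1) : ℕ) : ℤ) := by omega
            omega
      · -- Xhat i j ≤ Xhat (i+1) (j+1)
        by_cases hjk : j + 1 ≤ k
        · rw [hXhat1 (i+1) (j+1) (by omega) (by omega) hin hjk,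
            hXhat1 i j hj hji (by omega) (by omega),
            hY₀X (i+1) (j+1) (by omega) (by omega) hin hjk,
            hY₀X i j hj hji (by omega) (by omega)]
          exact (hY₀g.1.2 i j hj hji hin).2
        · by_cases hjk2 : j ≤ k
          · -- j = k
            have hjke : j = k := by omega
            subst hjke
            rw [hXhat1 i j hj hji (by omega) le_rfl]
            rw [hXhat2 (i+1) (j+1) (by omega) (by omega) hin (by omega)]
            have h4 : (1 : ℕ) ∈ Finset.range (j + 1 - j + 1) := by
              rw [Finset.mem_range]; omega
            have h5 := Finset.le_sup'
              (fun t => X (i + 1 - t) j + ((j + 1 - j - t : ℕ) : ℤ) : ℕ → ℤ) h4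
            beta_reduce at h5
            rw [show i + 1 - 1 = i by omega] at h5
            have h6 : ((j + 1 - j - 1 : ℕ) : ℤ) = 0 := by omega
            omega
          · have hkj : k < j := by omega
            rw [hXhat2 (i+1) (j+1) (by omega) (by omega) hin (by omega),
              hXhat2 i j hj hji (by omega) hkj]
            apply Finset.sup'_le
            intro t ht
            rw [Finset.mem_range] at ht
            have h4 : t + 1 ∈ Finset.range (j + 1 - k + 1) := by
              rw [Finset.mem_range]; omega
            have h5 := Finset.le_sup'
              (fun s => X (i + 1 - s) k + ((j + 1 - k - s : ℕ) : ℤ) : ℕ → ℤ) h4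
            beta_reduce at h5 ⊢
            rw [show i + 1 - (t + 1) = i - t by omega] at h5
            have h6 : ((j + 1 - k - (t + 1) : ℕ) : ℤ) = ((j - k - t : ℕ) : ℤ) := by
              omega
            omega
    · -- strict rows
      intro i j hj hji hin
      by_cases hjk : j + 1 ≤ k
      · rw [hXhat1 i (j+1) (by omega) hji hin hjk,
          hXhat1 i j hj (by omega) hin (by omega),
          hY₀X i (j+1) (by omega) hji hin hjk,
          hY₀X i j hj (by omega) hin (by omega)]
        exact hY₀g.2.1 i j hj hji hin
      · by_cases hjk2 : j ≤ k
        · have hjke : j = k := by omega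
          subst hjke
          rw [hXhat1 i j hj (by omega) hin le_rfl]
          have h2 := hlow i (j+1) (by omega) hji hin (by omega)
          have h6 : ((j + 1 - j : ℕ) : ℤ) = 1 := by omega
          omega
        · have hkj : k < j := by omega
          rw [hXhat2 i j hj (by omega) hin hkj]
          rw [Finset.sup'_lt_iff]
          intro t ht
          rw [Finset.mem_range] at ht
          rw [hXhat2 i (j+1) (by omega) hji hin (by omega)]
          have h4 : t ∈ Finset.range (j + 1 - k + 1) := by
            rw [Finset.mem_range]; omega
          have h5 := Finset.le_sup'
            (fun s => X (i - s) k + ((j + 1 - k - s : ℕ) : ℤ) : ℕ → ℤ) h4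
          beta_reduce at h5 ⊢
          have h6 : ((j - k - t : ℕ) : ℤ) < ((j + 1 - k - t : ℕ) : ℤ) := by omega
          omega
    · -- top row
      intro j hj hjn
      by_cases hjk : j ≤ k
      · rw [hXhat1 n j hj hjn le_rfl hjk, hY₀X n j hj hjn le_rfl hjk]
        exact hY₀g.2.2 j hj hjn
      · have h1 := hlow n j hj hjn le_rfl (by omega)
        have h2 := hmin Y₀ hY₀g hY₀X n j hj hjn le_rfl
        have h3 : Y₀ n j = (j : ℤ) := hY₀g.2.2 j hj hjn
        have h4 : X n k = Y₀ n k := hXeq n hkn le_rfl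
        have h5 : Y₀ n k = (k : ℤ) := hY₀g.2.2 k hk1 hkn
        omega
  · intro Y hY hYX i j hj hji hin
    exact hmin Y hY (fun i j h1 h2 h3 h4 => (hYX i j h1 h2 h3 h4).symm) i j hj hji hin
end

section
/- Let X be a GOGAm triangle of size n and let k ≥ 1. Define the array Y by Y_{i,j} = 1 for all indices with n ≥ i ≥ j+k, and Y_{i,j} = X_{i,j} otherwise. Then Y is a GOGAm triangle of size n. -/
/-- Replacing the entries of a GOGAm triangle on the upper-left triangle
`n ≥ i ≥ j + k` by `1` yields again a GOGAm triangle. -/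
theorem stmt2 (n k : ℕ) (hk : 1 ≤ k) (X : ℕ → ℕ → ℤ) (hX : IsGogam n X) :
    IsGogam n (fun i j => if j + k ≤ i then 1 else X i j) := by
  obtain ⟨⟨hpos, hmono⟩, htop, hineq⟩ := hX
  have hdiag : ∀ d r c, 1 ≤ c → c ≤ r → r + d ≤ n → X r c ≤ X (r + d) (c + d) := by
    intro d
    induction d with
    | zero => intro r c _ _ _; exact le_refl _
    | succ d ih =>
      intro r c h1 h2 h3
      have h4 : r + d ≤ n := by omega
      calc X r c ≤ X (r + d) (c + d) := ih r c h1 h2 h4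
        _ ≤ X (r + d + 1) (c + d + 1) :=
            (hmono (r + d) (c + d) (by omega) (by omega) (by omega)).2
  refine ⟨⟨?_, ?_⟩, ?_, ?_⟩
  · intro i j h1 h2 h3
    by_cases h : j + k ≤ i
    · simp [h]
    · simpa [h] using hpos i j h1 h2 h3
  · intro i j h1 h2 h3
    constructor
    · by_cases h : j + k ≤ i
      · have h' : j + k ≤ i + 1 := by omega
        simp [h, h']
      · by_cases h' : j + k ≤ i + 1
        · simpa [h, h'] using hpos i j h1 h2 (by omega)
        · simpa [h, h'] using (hmono i j h1 h2 h3).1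
    · by_cases h : j + k ≤ i
      · have h' : j + 1 + k ≤ i + 1 := by omega
        simp only [h, h', if_true, if_pos]
        exact le_refl _
      · have h' : ¬ (j + 1 + k ≤ i + 1) := by omega
        simpa [h, h'] using (hmono i j h1 h2 h3).2
  · have h : ¬ (n + k ≤ n) := by omega
    simpa [h] using htop
  · intro k' hk'1 hk'2 j hj0 hjdec hjlast
    have hXineq := hineq k' hk'1 hk'2 j hj0 hjdec hjlast
    set m := n - k' with hm
    have hjbound : ∀ i, i ≤ m → j i + i ≤ n := by
      intro i hi
      induction i with
      | zero => omega
      | succ i ih =>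
        have h1 := hjdec i (by omega)
        have h2 := ih (by omega)
        omega
    have hjpos : ∀ i, i ≤ m → 1 ≤ j i := by
      intro i hi
      have key : ∀ d, i + d ≤ m → j (i + d) ≤ j i := by
        intro d
        induction d with
        | zero => intro _; exact le_refl _
        | succ d ih =>
          intro h
          have h1 := hjdec (i + d) (by omega)
          have h2 := ih (by omega)
          show j (i + d + 1) ≤ j i
          omega
      have h5 := key (m - i) (by omega)
      rw [Nat.add_sub_cancel' hi] at h5
      omega
    have hterm : ∀ i, i + 1 ≤ m →
        X (j (i+1) + i) (j (i+1)) ≤ X (j i + i) (j i) := by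
      intro i hi
      have hlt := hjdec i (by omega)
      have h1 := hjpos (i+1) (by omega)
      have h2 := hjbound i (by omega)
      have h5 := hdiag (j i - j (i+1)) (j (i+1) + i) (j (i+1)) h1 (by omega) (by omega)
      have e1 : j (i+1) + i + (j i - j (i+1)) = j i + i := by omega
      have e2 : j (i+1) + (j i - j (i+1)) = j i := by omega
      rwa [e1, e2] at h5
    by_cases hkm : k ≤ m
    · -- split the X-sum
      have hsplit :
          ∑ i ∈ Finset.range k, (X (j i + i) (j i) - X (j (i+1) + i) (j (i+1)))
          + ∑ i ∈ Finset.Ico k m, (X (j i + i) (j i) - X (j (i+1) + i) (j (i+1)))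
          = ∑ i ∈ Finset.range m, (X (j i + i) (j i) - X (j (i+1) + i) (j (i+1))) :=
        Finset.sum_range_add_sum_Ico _ hkm
      have htail : 0 ≤ ∑ i ∈ Finset.Ico k m,
          (X (j i + i) (j i) - X (j (i+1) + i) (j (i+1))) := by
        refine Finset.sum_nonneg fun i hi => ?_
        have hi2 := (Finset.mem_Ico.mp hi).2
        have := hterm i (by omega)
        omega
      have hAm : 1 ≤ X (j m + m) (j m) := hpos _ _ (hjlast) (by omega) (hjbound m le_rfl)
      -- compute the Y-sum
      have hYsplit :
          ∑ i ∈ Finset.range m,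
            ((if j i + k ≤ j i + i then (1:ℤ) else X (j i + i) (j i))
              - (if j (i+1) + k ≤ j (i+1) + i then (1:ℤ) else X (j (i+1) + i) (j (i+1))))
          = ∑ i ∈ Finset.range k, (X (j i + i) (j i) - X (j (i+1) + i) (j (i+1))) := by
        rw [← Finset.sum_range_add_sum_Ico _ hkm]
        have e1 : ∀ i ∈ Finset.range k,
            ((if j i + k ≤ j i + i then (1:ℤ) else X (j i + i) (j i))
              - (if j (i+1) + k ≤ j (i+1) + i then (1:ℤ) else X (j (i+1) + i) (j (i+1))))
            = X (j i + i) (j i) - X (j (i+1) + i) (j (i+1)) := by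
          intro i hi
          have hik : i < k := Finset.mem_range.mp hi
          rw [if_neg (by omega), if_neg (by omega)]
        have e2 : ∀ i ∈ Finset.Ico k m,
            ((if j i + k ≤ j i + i then (1:ℤ) else X (j i + i) (j i))
              - (if j (i+1) + k ≤ j (i+1) + i then (1:ℤ) else X (j (i+1) + i) (j (i+1))))
            = 0 := by
          intro i hi
          have hik := (Finset.mem_Ico.mp hi).1
          rw [if_pos (by omega), if_pos (by omega)]
          ring
        rw [Finset.sum_congr rfl e1, Finset.sum_congr rfl e2, Finset.sum_const_zero, add_zero]
      have hYlast : (if j m + k ≤ j m + m then (1:ℤ) else X (j m + m) (j m)) = 1 :=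
        if_pos (by omega)
      simp only []
      rw [hYsplit, hYlast]
      rw [← hsplit] at hXineq
      omega
    · -- no entry is replaced
      have e1 : ∀ i ∈ Finset.range m,
          ((if j i + k ≤ j i + i then (1:ℤ) else X (j i + i) (j i))
            - (if j (i+1) + k ≤ j (i+1) + i then (1:ℤ) else X (j (i+1) + i) (j (i+1))))
          = X (j i + i) (j i) - X (j (i+1) + i) (j (i+1)) := by
        intro i hi
        have hik : i < m := Finset.mem_range.mp hi
        rw [if_neg (by omega), if_neg (by omega)]
      have hYlast : (if j m + k ≤ j m + m then (1:ℤ) else X (j m + m) (j m))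
          = X (j m + m) (j m) := if_neg (by omega)
      simp only []
      rw [Finset.sum_congr rfl e1, hYlast]
      exact hXineq
end

section
/- Let n ≥ m ≥ k ≥ 1 and let X be a GOGAm triangle of size n which is constant on each partial SW-NE diagonal starting at column k in row i for every i ≥ m+1, i.e. X_{i+t,k+t} = X_{i,k} for all i ≥ m+1 and 0 ≤ t ≤ n−i. Define the array Y by Y_{m+t,k+t} = X_{m,k} for 1 ≤ t ≤ n−m, and Y_{i,j} = X_{i,j} for all other indices. Then Y is a GOGAm triangle of size n. -/
/-- If a GOGAm triangle is constant on each partial SW-NE diagonal starting at column `k`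
in row `i` for every `i ≥ m+1`, then replacing the entries `X (m+t) (k+t)` (for
`1 ≤ t ≤ n-m`) by `X m k` yields again a GOGAm triangle. -/
theorem stmt3 (n m k : ℕ) (hk : 1 ≤ k) (hkm : k ≤ m) (hmn : m ≤ n)
    (X : ℕ → ℕ → ℤ) (hX : IsGogam n X)
    (hconst : ∀ i, m + 1 ≤ i → i ≤ n → ∀ t, t ≤ n - i → X (i + t) (k + t) = X i k) :
    IsGogam n (fun i j => if m < i ∧ k < j ∧ i - m = j - k then X m k else X i j) := by
  obtain ⟨⟨hpos, hGT⟩, hnn, hsum⟩ := hX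
  set Y : ℕ → ℕ → ℤ := fun i j => if m < i ∧ k < j ∧ i - m = j - k then X m k else X i j
    with hYdef
  have hYP : ∀ a b : ℕ, m < a → k < b → a - m = b - k → Y a b = X m k := by
    intro a b h1 h2 h3
    simp only [hYdef]
    exact if_pos ⟨h1, h2, h3⟩
  have hYN : ∀ a b : ℕ, ¬(m < a ∧ k < b ∧ a - m = b - k) → Y a b = X a b := by
    intro a b h
    simp only [hYdef]
    exact if_neg h
  have hDiag : ∀ a d : ℕ, k ≤ a → a + d + (m - k) ≤ n →
      X (a + (m - k)) a ≤ X (a + d + (m - k)) (a + d) := by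
    intro a d hka
    induction d with
    | zero => intro _; exact le_refl _
    | succ d ih =>
      intro h
      refine le_trans (ih (by omega)) ?_
      have h2 := (hGT (a + d + (m - k)) (a + d) (by omega) (by omega) (by omega)).2
      have e1 : a + d + (m - k) + 1 = a + (d + 1) + (m - k) := by omega
      have e2 : a + d + 1 = a + (d + 1) := by omega
      rw [e1, e2] at h2
      exact h2
  have hDiag' : ∀ a b : ℕ, k ≤ a → a ≤ b → b + (m - k) ≤ n →
      X (a + (m - k)) a ≤ X (b + (m - k)) b := by
    intro a b hka hab hbn
    have h := hDiag a (b - a) hka (by omega)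
    have e1 : a + (b - a) + (m - k) = b + (m - k) := by omega
    have e2 : a + (b - a) = b := by omega
    rw [e1, e2] at h
    exact h
  have hCle : ∀ a b : ℕ, m < a → k < b → a - m = b - k → a ≤ n → X m k ≤ X a b := by
    intro a b h1 h2 h3 h4
    have e : b + (m - k) = a := by omega
    have h := hDiag' k b (le_refl k) (by omega) (by omega)
    rw [show k + (m - k) = m from by omega, e] at h
    exact h
  have hYleX : ∀ a b : ℕ, a ≤ n → Y a b ≤ X a b := by
    intro a b h
    by_cases hP : m < a ∧ k < b ∧ a - m = b - k
    · rw [hYP a b hP.1 hP.2.1 hP.2.2]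
      exact hCle a b hP.1 hP.2.1 hP.2.2 h
    · rw [hYN a b hP]
  have hConstLow : ∀ t : ℕ, m + 1 + t ≤ n → X (m + 1 + t) (k + t) ≤ X m k := by
    intro t h
    have h1 := hconst (m + 1) (le_refl _) (by omega) t (by omega)
    rw [h1]
    exact (hGT m k hk hkm (by omega)).1
  refine ⟨⟨?_, ?_⟩, ?_, ?_⟩
  · -- positivity
    intro i j h1 h2 h3
    by_cases hP : m < i ∧ k < j ∧ i - m = j - k
    · rw [hYP i j hP.1 hP.2.1 hP.2.2]
      exact hpos m k hk hkm hmn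
    · rw [hYN i j hP]
      exact hpos i j h1 h2 h3
  · -- GT inequalities
    intro i j h1 h2 h3
    constructor
    · -- Y (i+1) j ≤ Y i j
      by_cases hA : m < i + 1 ∧ k < j ∧ (i + 1) - m = j - k
      · rw [hYP _ _ hA.1 hA.2.1 hA.2.2]
        have hB : ¬(m < i ∧ k < j ∧ i - m = j - k) := by omega
        rw [hYN i j hB]
        exact le_trans (hCle (i + 1) j hA.1 hA.2.1 hA.2.2 h3) (hGT i j h1 h2 h3).1
      · rw [hYN _ _ hA]
        by_cases hB : m < i ∧ k < j ∧ i - m = j - k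
        · rw [hYP _ _ hB.1 hB.2.1 hB.2.2]
          have h5 := hConstLow (j - k) (by omega)
          rw [show m + 1 + (j - k) = i + 1 from by omega,
              show k + (j - k) = j from by omega] at h5
          exact h5
        · rw [hYN _ _ hB]
          exact (hGT i j h1 h2 h3).1
    · -- Y i j ≤ Y (i+1) (j+1)
      by_cases hB : m < i ∧ k < j ∧ i - m = j - k
      · rw [hYP _ _ hB.1 hB.2.1 hB.2.2,
            hYP (i + 1) (j + 1) (by omega) (by omega) (by omega)]
      · rw [hYN _ _ hB]
        by_cases hC : m < i + 1 ∧ k < j + 1 ∧ (i + 1) - m = (j + 1) - k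
        · rw [hYP _ _ hC.1 hC.2.1 hC.2.2]
          have heq : i = m ∧ j = k := by omega
          rw [heq.1, heq.2]
        · rw [hYN _ _ hC]
          exact (hGT i j h1 h2 h3).2
  · -- Y n n ≤ n
    by_cases hP : m < n ∧ k < n ∧ n - m = n - k
    · rw [hYP _ _ hP.1 hP.2.1 hP.2.2]
      exact le_trans (hCle n n hP.1 hP.2.1 hP.2.2 (le_refl n)) hnn
    · rw [hYN _ _ hP]
      exact hnn
  · -- the sum inequalities
    intro K hK1 hK2 j hj0 hdec hlast
    have hXs := hsum K hK1 hK2 j hj0 hdec hlast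
    refine le_trans ?_ hXs
    have hjle : ∀ i, i ≤ n - K → j i + i ≤ n := by
      intro i
      induction i with
      | zero => intro _; omega
      | succ p ih =>
        intro h
        have h1 := ih (by omega)
        have h2 := hdec p (by omega)
        omega
    refine add_le_add (Finset.sum_le_sum ?_) (hYleX _ _ (hjle _ (le_refl _)))
    intro i hi
    have hiN : i < n - K := Finset.mem_range.mp hi
    have hb := hjle i (by omega)
    by_cases hNg : m < j (i + 1) + i ∧ k < j (i + 1) ∧ (j (i + 1) + i) - m = j (i + 1) - k
    · rw [hYP _ _ hNg.1 hNg.2.1 hNg.2.2]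
      have hlt : j (i + 1) < j i := hdec i hiN
      have hP : m < j i + i ∧ k < j i ∧ (j i + i) - m = j i - k := by omega
      rw [hYP _ _ hP.1 hP.2.1 hP.2.2]
      have hd := hDiag' (j (i + 1)) (j i) (by omega) (by omega) (by omega)
      rw [show j (i + 1) + (m - k) = j (i + 1) + i from by omega,
          show j i + (m - k) = j i + i from by omega] at hd
      linarith
    · rw [hYN _ _ hNg]
      have h1 : Y (j i + i) (j i) ≤ X (j i + i) (j i) := hYleX _ _ hb
      linarith
end

section
/- Let n ≥ k ≥ 1 and let X be an (n,k) right GOGAm trapezoid. Define the array X̂ of size n by X̂_{i,j} = X_{i,j} for indices in the trapezoid (i−j ≤ k−1) and X̂_{i,j} = 1 for n ≥ i ≥ j+k. Then X̂ is a GOGAm triangle of size n, and it is the minimal GOGAm triangle extending X: for every GOGAm triangle Y of size n whose restriction to the indices with i−j ≤ k−1 equals X, one has X̂_{i,j} ≤ Y_{i,j} for all n ≥ i ≥ j ≥ 1. -/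
/-- Minimal completion of an `(n,k)` right GOGAm trapezoid: filling with `1`'s gives
the smallest GOGAm triangle of size `n` extending it. -/
theorem stmt4 (n k : ℕ) (hk1 : 1 ≤ k) (hkn : k ≤ n) (X : ℕ → ℕ → ℤ)
    (hX : ∃ Y : ℕ → ℕ → ℤ, IsGogam n Y ∧
      ∀ i j, 1 ≤ j → j ≤ i → i ≤ n → i < j + k → X i j = Y i j) :
    IsGogam n (fun i j => if i < j + k then X i j else 1) ∧
    ∀ Y : ℕ → ℕ → ℤ, IsGogam n Y →
      (∀ i j, 1 ≤ j → j ≤ i → i ≤ n → i < j + k → Y i j = X i j) →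
      ∀ i j, 1 ≤ j → j ≤ i → i ≤ n →
        (if i < j + k then X i j else (1 : ℤ)) ≤ Y i j := by
  obtain ⟨Y, ⟨⟨hpos, hGT⟩, hYnn, hsum⟩, hEq⟩ := hX
  have hZ1 : ∀ i j : ℕ, 1 ≤ j → j ≤ i → i ≤ n → i < j + k →
      (if i < j + k then X i j else (1:ℤ)) = Y i j := by
    intro i j h1 h2 h3 h4
    rw [if_pos h4, hEq i j h1 h2 h3 h4]
  constructor
  · refine ⟨⟨?_, ?_⟩, ?_, ?_⟩
    · intro i j h1 h2 h3
      dsimp only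
      split_ifs with h
      · rw [hEq i j h1 h2 h3 h]; exact hpos i j h1 h2 h3
      · exact le_refl 1
    · intro i j h1 h2 h3
      dsimp only
      have hY1 := hGT i j h1 h2 h3
      constructor
      · by_cases h : i < j + k
        · rw [if_pos h]
          by_cases h' : i + 1 < j + k
          · rw [if_pos h', hEq i j h1 h2 (by omega) h, hEq (i+1) j h1 (by omega) h3 h']
            exact hY1.1
          · rw [if_neg h', hEq i j h1 h2 (by omega) h]
            exact hpos i j h1 h2 (by omega)
        · rw [if_neg h, if_neg (by omega)]
      · by_cases h : i < j + k
        · rw [if_pos h, if_pos (by omega : i + 1 < j + 1 + k),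
            hEq i j h1 h2 (by omega) h, hEq (i+1) (j+1) (by omega) (by omega) h3 (by omega)]
          exact hY1.2
        · rw [if_neg h, if_neg (by omega : ¬ i + 1 < j + 1 + k)]
    · dsimp only
      rw [if_pos (by omega : n < n + k), hEq n n (by omega) le_rfl le_rfl (by omega)]
      exact hYnn
    · intro K hK1 hKn j hj0 hdec hjm
      dsimp only
      set m := n - K with hm
      have hmono : ∀ d a, a + d ≤ m → j (a + d) + d ≤ j a := by
        intro d
        induction d with
        | zero => intro a _; simp
        | succ d ih =>
          intro a h
          have h1 := ih (a + 1) (by omega)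
          have h2 := hdec a (by omega)
          have h3 : a + (d + 1) = (a + 1) + d := by omega
          rw [h3]; omega
      have hub : ∀ i, i ≤ m → j i + i ≤ n := by
        intro i hi
        have := hmono i 0 (by omega)
        simp only [Nat.zero_add] at this
        omega
      have hlb : ∀ i, i ≤ m → m - i + 1 ≤ j i := by
        intro i hi
        have := hmono (m - i) i (by omega)
        rw [show i + (m - i) = m from by omega] at this
        omega
      by_cases hcase : m < k
      · have key := hsum K hK1 hKn j hj0 hdec hjm
        have e1 : ∀ i ∈ Finset.range m,
            ((if j i + i < j i + k then X (j i + i) (j i) else (1:ℤ)) -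
             (if j (i+1) + i < j (i+1) + k then X (j (i+1) + i) (j (i+1)) else 1)) =
            Y (j i + i) (j i) - Y (j (i+1) + i) (j (i+1)) := by
          intro i hi
          simp only [Finset.mem_range] at hi
          rw [hZ1 (j i + i) (j i) (by have := hlb i (by omega); omega) (by omega)
              (hub i (by omega)) (by omega),
            hZ1 (j (i+1) + i) (j (i+1)) (by have := hlb (i+1) (by omega); omega) (by omega)
              (by have := hub (i+1) (by omega); omega) (by omega)]
        rw [Finset.sum_congr rfl e1,
          hZ1 (j m + m) (j m) (by have := hlb m le_rfl; omega) (by omega) (hub m le_rfl)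
            (by omega)]
        exact key
      · push_neg at hcase
        set j' : ℕ → ℕ := fun i => if i ≤ k then j i else j k - (i - k) with hj'
        have hj'le : ∀ i, i ≤ k → j' i = j i := by intro i hi; simp [hj', hi]
        have hj'ge : ∀ i, k ≤ i → j' i = j k - (i - k) := by
          intro i hi
          rcases Nat.eq_or_lt_of_le hi with h | h
          · simp [hj', ← h]
          · simp [hj', Nat.not_le.mpr h]
        have hjk := hlb k hcase
        have hjkub := hub k hcase
        have hj'0 : j' 0 = n := by rw [hj'le 0 (by omega), hj0]
        have hdec' : ∀ i, i < m → j' (i+1) < j' i := by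
          intro i hi
          by_cases h : i + 1 ≤ k
          · rw [hj'le (i+1) h, hj'le i (by omega)]
            exact hdec i hi
          · rw [hj'ge (i+1) (by omega), hj'ge i (by omega)]
            omega
        have hj'm : 1 ≤ j' m := by rw [hj'ge m hcase]; omega
        have key := hsum K hK1 hKn j' hj'0 hdec' hj'm
        rw [← hm] at key
        have hsplit : ∀ f : ℕ → ℤ, ∑ i ∈ Finset.range m, f i
            = ∑ i ∈ Finset.range k, f i + ∑ i ∈ Finset.Ico k m, f i := by
          intro f
          simp only [Finset.range_eq_Ico]
          exact (Finset.sum_Ico_consecutive f (Nat.zero_le k) hcase).symm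
        rw [hsplit]
        have hpre : ∑ i ∈ Finset.range k,
            ((if j i + i < j i + k then X (j i + i) (j i) else (1:ℤ)) -
             (if j (i+1) + i < j (i+1) + k then X (j (i+1) + i) (j (i+1)) else 1))
            = ∑ i ∈ Finset.range k, (Y (j' i + i) (j' i) - Y (j' (i+1) + i) (j' (i+1))) := by
          refine Finset.sum_congr rfl fun i hi => ?_
          simp only [Finset.mem_range] at hi
          rw [hj'le i (by omega), hj'le (i+1) (by omega),
            hZ1 (j i + i) (j i) (by have := hlb i (by omega); omega) (by omega)
              (hub i (by omega)) (by omega),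
            hZ1 (j (i+1) + i) (j (i+1)) (by have := hlb (i+1) (by omega); omega) (by omega)
              (by have := hub (i+1) (by omega); omega) (by omega)]
        have htail0 : ∑ i ∈ Finset.Ico k m,
            ((if j i + i < j i + k then X (j i + i) (j i) else (1:ℤ)) -
             (if j (i+1) + i < j (i+1) + k then X (j (i+1) + i) (j (i+1)) else 1)) = 0 := by
          refine Finset.sum_eq_zero fun i hi => ?_
          simp only [Finset.mem_Ico] at hi
          rw [if_neg (by omega), if_neg (by omega)]
          ring
        have hlast : (if j m + m < j m + k then X (j m + m) (j m) else (1:ℤ)) = 1 :=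
          if_neg (by omega)
        rw [hpre, htail0, hlast]
        rw [hsplit] at key
        have htailpos : 0 ≤ ∑ i ∈ Finset.Ico k m,
            (Y (j' i + i) (j' i) - Y (j' (i+1) + i) (j' (i+1))) := by
          refine Finset.sum_nonneg fun i hi => ?_
          simp only [Finset.mem_Ico] at hi
          have e3 : j' (i+1) = j k - (i+1-k) := hj'ge (i+1) (by omega)
          have e1 : j' i + i = j k + k := by rw [hj'ge i hi.1]; omega
          have e2 : j' (i+1) + i = j k + k - 1 := by rw [e3]; omega
          have hb := hGT (j k + k - 1) (j' (i+1)) (by omega) (by omega) (by omega)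
          have e4 : j k + k - 1 + 1 = j k + k := by omega
          have e5 : j' (i+1) + 1 = j' i := by rw [hj'ge i hi.1, e3]; omega
          rw [e1, e2]
          have hb2 := hb.2
          rw [e4, e5] at hb2
          linarith
        have hlastY : (1:ℤ) ≤ Y (j' m + m) (j' m) := by
          have e : j' m + m = j k + k := by rw [hj'ge m hcase]; omega
          exact hpos (j' m + m) (j' m) hj'm (by omega) (by rw [e]; exact hjkub)
        linarith
  · intro Y' hY' hEq' i j h1 h2 h3
    split_ifs with h
    · exact (hEq' i j h1 h2 h3 h).ge
    · exact hY'.1.1 i j h1 h2 h3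
end

section
/- Let n ≥ k ≥ 1 and let X be an (n,k) left GOGAm trapezoid. Define the array X̂ of size n by X̂_{i,j} = X_{i,j} for j ≤ k and X̂_{i,j} = X_{i−j+k,k} for n ≥ i ≥ j ≥ k (so the added entries are constant along SW-NE diagonals). Then X̂ is a GOGAm triangle of size n, and it is the minimal GOGAm triangle extending X: for every GOGAm triangle Y of size n whose restriction to the indices with j ≤ k equals X, one has X̂_{i,j} ≤ Y_{i,j} for all n ≥ i ≥ j ≥ 1. -/
private lemma diagLe {n : ℕ} {Y : ℕ → ℕ → ℤ} (hY : IsGT n Y) (d : ℕ) :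
    ∀ r c, 1 ≤ c → c ≤ r → r + d ≤ n → Y r c ≤ Y (r + d) (c + d) := by
  induction d with
  | zero => intro r c _ _ _; simp
  | succ d ih =>
    intro r c h1 h2 h3
    calc Y r c ≤ Y (r + d) (c + d) := ih r c h1 h2 (by omega)
      _ ≤ Y (r + (d+1)) (c + (d+1)) :=
        (hY.2 (r + d) (c + d) (by omega) (by omega) (by omega)).2

private lemma jbound {n N : ℕ} {j : ℕ → ℕ} (hj0 : j 0 = n)
    (hdec : ∀ i, i < N → j (i+1) < j i) (hN : 1 ≤ j N) :
    ∀ i, i ≤ N → 1 ≤ j i ∧ j i + i ≤ n := by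
  have h2 : ∀ i, i ≤ N → j i + i ≤ n := by
    intro i
    induction i with
    | zero => intro _; omega
    | succ i ih =>
      intro h
      have := hdec i (by omega)
      have := ih (by omega)
      omega
  have h1 : ∀ m, m ≤ N → 1 ≤ j (N - m) := by
    intro m
    induction m with
    | zero => intro _; simpa using hN
    | succ m ih =>
      intro hm
      have ha := ih (by omega)
      have hb := hdec (N - (m+1)) (by omega)
      rw [show N - (m+1) + 1 = N - m by omega] at hb
      omega
  intro i hi
  have := h1 (N - i) (by omega)
  rw [show N - (N - i) = i by omega] at this
  exact ⟨this, h2 i hi⟩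

/-- Minimal completion of an `(n,k)` left GOGAm trapezoid: the added entries are
constant on SW-NE diagonals, `X̂ i j = X (i-j+k) k` for `j ≥ k`; this gives the
smallest GOGAm triangle of size `n` extending the trapezoid. -/
theorem stmt5 (n k : ℕ) (hk1 : 1 ≤ k) (hkn : k ≤ n) (X : ℕ → ℕ → ℤ)
    (hX : ∃ Y : ℕ → ℕ → ℤ, IsGogam n Y ∧
      ∀ i j, 1 ≤ j → j ≤ i → i ≤ n → j ≤ k → X i j = Y i j) :
    IsGogam n (fun i j => if j ≤ k then X i j else X (i - j + k) k) ∧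
    ∀ Y : ℕ → ℕ → ℤ, IsGogam n Y →
      (∀ i j, 1 ≤ j → j ≤ i → i ≤ n → j ≤ k → Y i j = X i j) →
      ∀ i j, 1 ≤ j → j ≤ i → i ≤ n →
        (if j ≤ k then X i j else X (i - j + k) k) ≤ Y i j := by
  obtain ⟨Y, hYG, hXY⟩ := hX
  obtain ⟨hGT, hnn, hsum⟩ := hYG
  have hval : ∀ i j, 1 ≤ j → j ≤ i → i ≤ n →
      (if j ≤ k then X i j else X (i - j + k) k)
        = (if j ≤ k then Y i j else Y (i - j + k) k) := by
    intro i j h1 h2 h3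
    by_cases h : j ≤ k
    · rw [if_pos h, if_pos h, hXY i j h1 h2 h3 h]
    · rw [if_neg h, if_neg h, hXY (i - j + k) k hk1 (by omega) (by omega) le_rfl]
  have hdiagY : ∀ i j, k ≤ j → j ≤ i → i ≤ n → Y (i - j + k) k ≤ Y i j := by
    intro i j h1 h2 h3
    have h := diagLe hGT (j - k) (i - j + k) k hk1 (by omega) (by omega)
    rw [show i - j + k + (j - k) = i by omega, show k + (j - k) = j by omega] at h
    exact h
  constructor
  · refine ⟨⟨?_, ?_⟩, ?_, ?_⟩
    · -- positivity
      intro i j h1 h2 h3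
      dsimp only
      rw [hval i j h1 h2 h3]
      by_cases h : j ≤ k
      · rw [if_pos h]; exact hGT.1 i j h1 h2 h3
      · rw [if_neg h]; exact hGT.1 _ k hk1 (by omega) (by omega)
    · -- GT inequalities
      intro i j h1 h2 h3
      dsimp only
      rw [hval i j h1 h2 (by omega), hval (i+1) j h1 (by omega) h3,
          hval (i+1) (j+1) (by omega) (by omega) h3]
      by_cases hj : j + 1 ≤ k
      · rw [if_pos hj, if_pos (show j ≤ k by omega), if_pos (show j ≤ k by omega)]
        exact hGT.2 i j h1 h2 h3
      · by_cases hj2 : j ≤ k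
        · -- j = k
          rw [if_pos hj2, if_pos hj2, if_neg hj,
              show i + 1 - (j+1) + k = i by omega, show j = k by omega]
          exact ⟨(hGT.2 i k (by omega) (by omega) h3).1, le_rfl⟩
        · -- j > k
          rw [if_neg hj2, if_neg hj2, if_neg hj,
              show i + 1 - j + k = (i - j + k) + 1 by omega,
              show i + 1 - (j+1) + k = i - j + k by omega]
          exact ⟨(hGT.2 (i - j + k) k hk1 (by omega) (by omega)).1, le_rfl⟩
    · -- Z n n ≤ n
      dsimp only
      by_cases h : n ≤ k
      · rw [if_pos h, hXY n n (by omega) le_rfl le_rfl h]; exact hnn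
      · rw [if_neg h, hXY (n - n + k) k hk1 (by omega) (by omega) le_rfl]
        exact le_trans (hdiagY n n hkn le_rfl le_rfl) hnn
    · -- sum condition
      intro m hm1 hm2 j hj0 hdec hjN
      dsimp only
      have hjb := jbound hj0 hdec hjN
      have hterm : ∀ i ∈ Finset.range (n - m),
          (if j i ≤ k then X (j i + i) (j i) else X (j i + i - j i + k) k)
            - (if j (i+1) ≤ k then X (j (i+1) + i) (j (i+1))
              else X (j (i+1) + i - j (i+1) + k) k)
          ≤ Y (j i + i) (j i) - Y (j (i+1) + i) (j (i+1)) := by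
        intro i hi
        rw [Finset.mem_range] at hi
        obtain ⟨h1a, h1b⟩ := hjb i (by omega)
        obtain ⟨h2a, h2b⟩ := hjb (i+1) (by omega)
        have hd := hdec i hi
        rw [hval (j i + i) (j i) h1a (by omega) h1b,
            hval (j (i+1) + i) (j (i+1)) h2a (by omega) (by omega)]
        by_cases h1 : j i ≤ k
        · rw [if_pos h1, if_pos (show j (i+1) ≤ k by omega)]
        · by_cases h2 : j (i+1) ≤ k
          · rw [if_neg h1, if_pos h2]
            have := hdiagY (j i + i) (j i) (by omega) (by omega) h1b
            linarith
          · rw [if_neg h1, if_neg h2,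
                show j (i+1) + i - j (i+1) + k = j i + i - j i + k by omega]
            have h := diagLe hGT (j i - j (i+1)) (j (i+1) + i) (j (i+1)) h2a
              (by omega) (by omega)
            rw [show j (i+1) + i + (j i - j (i+1)) = j i + i by omega,
                show j (i+1) + (j i - j (i+1)) = j i by omega] at h
            linarith
      have hfin : (if j (n-m) ≤ k then X (j (n-m) + (n-m)) (j (n-m))
            else X (j (n-m) + (n-m) - j (n-m) + k) k)
          ≤ Y (j (n-m) + (n-m)) (j (n-m)) := by
        obtain ⟨h1a, h1b⟩ := hjb (n-m) le_rfl
        rw [hval (j (n-m) + (n-m)) (j (n-m)) h1a (by omega) h1b]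
        by_cases h : j (n-m) ≤ k
        · rw [if_pos h]
        · rw [if_neg h]
          exact hdiagY (j (n-m) + (n-m)) (j (n-m)) (by omega) (by omega) h1b
      calc _ ≤ (∑ i ∈ Finset.range (n - m),
              (Y (j i + i) (j i) - Y (j (i+1) + i) (j (i+1))))
            + Y (j (n-m) + (n-m)) (j (n-m)) :=
          add_le_add (Finset.sum_le_sum hterm) hfin
        _ ≤ (m : ℤ) := hsum m hm1 hm2 j hj0 hdec hjN
  · -- minimality
    intro Y' hY' hagree i j h1 h2 h3
    by_cases h : j ≤ k
    · rw [if_pos h, ← hagree i j h1 h2 h3 h]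
    · rw [if_neg h, ← hagree (i - j + k) k hk1 (by omega) (by omega) le_rfl]
      have hd := diagLe hY'.1 (j - k) (i - j + k) k hk1 (by omega) (by omega)
      rw [show i - j + k + (j - k) = i by omega, show k + (j - k) = j by omega] at hd
      exact hd
end

section
/- For every n ≥ 1, the set of (n,1) left Gog trapezoids and the set of (n,1) left GOGAm trapezoids both coincide with the set of sequences of positive integers (X_{n,1}, X_{n−1,1}, …, X_{1,1}) satisfying X_{i+1,1} ≤ X_{i,1} for 1 ≤ i ≤ n−1 and X_{j,1} ≤ n−j+1 for 1 ≤ j ≤ n; in particular the identity map is a bijection between (n,1) left Gog trapezoids and (n,1) left GOGAm trapezoids, and the number of such trapezoids is the Catalan number C_n. -/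
/-- Index set of an `(n,k)` left trapezoid: `n ≥ i ≥ j ≥ 1` with `j ≤ k`. -/
def LeftIdx (n k : ℕ) (i j : ℕ) : Prop := 1 ≤ j ∧ j ≤ i ∧ i ≤ n ∧ j ≤ k

/-- `(n,k)` left Gog trapezoids, normalized to vanish outside the trapezoid. -/
def LeftGogTrapezoids (n k : ℕ) : Set (ℕ → ℕ → ℤ) :=
  {X | (∃ Y, IsGog n Y ∧ ∀ i j, LeftIdx n k i j → X i j = Y i j) ∧
    ∀ i j, ¬ LeftIdx n k i j → X i j = 0}

/-- `(n,k)` left GOGAm trapezoids, normalized to vanish outside the trapezoid. -/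
def LeftGogamTrapezoids (n k : ℕ) : Set (ℕ → ℕ → ℤ) :=
  {X | (∃ Y, IsGogam n Y ∧ ∀ i j, LeftIdx n k i j → X i j = Y i j) ∧
    ∀ i j, ¬ LeftIdx n k i j → X i j = 0}

/-- The nondecreasing (from top to bottom) sequences of positive integers
`X n 1, ..., X 1 1` with `X j 1 ≤ n - j + 1`, normalized to vanish off the
single-column domain. -/
def ColumnSeqs (n : ℕ) : Set (ℕ → ℕ → ℤ) :=
  {X | (∀ i, 1 ≤ i → i ≤ n → 1 ≤ X i 1) ∧
    (∀ i, 1 ≤ i → i + 1 ≤ n → X (i+1) 1 ≤ X i 1) ∧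
    (∀ j, 1 ≤ j → j ≤ n → X j 1 ≤ (n : ℤ) - j + 1) ∧
    ∀ i j, ¬ LeftIdx n 1 i j → X i j = 0}

lemma gt_diag_s7 {n : ℕ} {X : ℕ → ℕ → ℤ} (h : IsGT n X) (i j d : ℕ)
    (h1 : 1 ≤ j) (h2 : j ≤ i) (h3 : i + d ≤ n) : X i j ≤ X (i+d) (j+d) := by
  induction d with
  | zero => simp
  | succ d ih =>
    have h4 := (h.2 (i+d) (j+d) (by omega) (by omega) (by omega)).2
    have h5 : i + (d+1) = i + d + 1 := by omega
    have h6 : j + (d+1) = j + d + 1 := by omega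
    rw [h5, h6]
    exact le_trans (ih (by omega)) h4

lemma gt_col {n : ℕ} {X : ℕ → ℕ → ℤ} (h : IsGT n X) (i d : ℕ)
    (h1 : 1 ≤ i) (h3 : i + d ≤ n) : X (i+d) 1 ≤ X i 1 := by
  induction d with
  | zero => simp
  | succ d ih =>
    have h4 := (h.2 (i+d) 1 (by omega) (by omega) (by omega)).1
    have h5 : i + (d+1) = i + d + 1 := by omega
    rw [h5]
    exact le_trans h4 (ih (by omega))

lemma gog_sub_col (n : ℕ) : LeftGogTrapezoids n 1 ⊆ ColumnSeqs n := by
  rintro X ⟨⟨Y, hY, hXY⟩, hz⟩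
  have hag : ∀ i, 1 ≤ i → i ≤ n → X i 1 = Y i 1 := fun i h1 h2 =>
    hXY i 1 ⟨le_refl 1, h1, h2, le_refl 1⟩
  refine ⟨?_, ?_, ?_, hz⟩
  · intro i h1 h2
    rw [hag i h1 h2]
    exact hY.1.1 i 1 le_rfl h1 h2
  · intro i h1 h2
    rw [hag i h1 (by omega), hag (i+1) (by omega) h2]
    exact (hY.1.2 i 1 le_rfl h1 h2).1
  · intro j h1 h2
    rw [hag j h1 h2]
    have hd := gt_diag_s7 hY.1 j 1 (n - j) le_rfl h1 (by omega)
    have he : j + (n - j) = n := by omega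
    rw [he] at hd
    have ht := hY.2.2 (1 + (n - j)) (by omega) (by omega)
    rw [ht] at hd
    have : ((1 + (n - j) : ℕ) : ℤ) = (n : ℤ) - j + 1 := by omega
    omega

lemma col_sub_gog (n : ℕ) : ColumnSeqs n ⊆ LeftGogTrapezoids n 1 := by
  rintro X ⟨hpos, hmono, hbd, hz⟩
  set Y : ℕ → ℕ → ℤ := fun i j => min (X (i - j + 1) 1 + (j : ℤ) - 1) ((n : ℤ) - i + j)
    with hYdef
  refine ⟨⟨Y, ⟨⟨?_, ?_⟩, ?_, ?_⟩, ?_⟩, hz⟩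
  · -- positivity
    intro i j h1 h2 h3
    have := hpos (i - j + 1) (by omega) (by omega)
    simp only [hYdef, le_min_iff]
    constructor
    · omega
    · omega
  · -- GT inequalities
    intro i j h1 h2 h3
    constructor
    · apply min_le_min
      · have : X (i + 1 - j + 1) 1 ≤ X (i - j + 1) 1 := by
          have h4 : i + 1 - j + 1 = (i - j + 1) + 1 := by omega
          rw [h4]
          exact hmono (i - j + 1) (by omega) (by omega)
        omega
      · push_cast; omega
    · apply min_le_min
      · have h4 : i + 1 - (j + 1) + 1 = i - j + 1 := by omega
        rw [h4]
        push_cast; omega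
      · push_cast; omega
  · -- strict rows
    intro i j h1 h2 h3
    have hm1 : Y i j ≤ X (i - j + 1) 1 + (j : ℤ) - 1 := min_le_left _ _
    have hm2 : Y i j ≤ (n : ℤ) - i + j := min_le_right _ _
    have hmm : X (i - j + 1) 1 ≤ X (i - j) 1 := by
      have h4 : i - j + 1 = (i - j) + 1 := by omega
      rw [h4]
      exact hmono (i - j) (by omega) (by omega)
    have h5 : i - (j + 1) + 1 = i - j := by omega
    simp only [hYdef, lt_min_iff]
    rw [h5]
    constructor
    · push_cast; omega
    · push_cast; omega
  · -- top row
    intro j h1 h2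
    have := hpos (n - j + 1) (by omega) (by omega)
    simp only [hYdef]
    have h4 : min (X (n - j + 1) 1 + (j : ℤ) - 1) ((n : ℤ) - n + j) = (n : ℤ) - n + j := by
      apply min_eq_right
      omega
    rw [h4]
    push_cast; omega
  · -- agreement
    rintro i j ⟨ha, hb, hc, hd⟩
    have hj : j = 1 := le_antisymm hd ha
    subst hj
    have h4 : i - 1 + 1 = i := by omega
    simp only [hYdef, h4]
    have := hbd i hb hc
    have h5 : X i 1 + ((1:ℕ) : ℤ) - 1 = X i 1 := by push_cast; ring
    rw [h5]
    symm
    apply min_eq_left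
    push_cast; omega

lemma gogam_sub_col (n : ℕ) : LeftGogamTrapezoids n 1 ⊆ ColumnSeqs n := by
  rintro X ⟨⟨Y, hY, hXY⟩, hz⟩
  have hag : ∀ i, 1 ≤ i → i ≤ n → X i 1 = Y i 1 := fun i h1 h2 =>
    hXY i 1 ⟨le_refl 1, h1, h2, le_refl 1⟩
  refine ⟨?_, ?_, ?_, hz⟩
  · intro i h1 h2
    rw [hag i h1 h2]
    exact hY.1.1 i 1 le_rfl h1 h2
  · intro i h1 h2
    rw [hag i h1 (by omega), hag (i+1) (by omega) h2]
    exact (hY.1.2 i 1 le_rfl h1 h2).1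
  · intro m h1 h2
    rw [hag m h1 h2]
    rcases Nat.lt_or_ge m 2 with hm | hm
    · -- m = 1
      have hm1 : m = 1 := by omega
      subst hm1
      have hd := gt_diag_s7 hY.1 1 1 (n - 1) le_rfl le_rfl (by omega)
      have he : 1 + (n - 1) = n := by omega
      rw [he] at hd
      have := hY.2.1
      push_cast
      omega
    · -- 2 ≤ m ≤ n
      set k := n - m + 1 with hk
      set jseq : ℕ → ℕ := fun i => if i < m - 1 then n - i else 1 with hjseq
      have hnk : n - k = m - 1 := by omega
      have hineq := hY.2.2 k (by omega) (by omega) jseq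
        (by simp only [hjseq]; rw [if_pos (by omega)]; omega)
        (by
          intro i hi
          rw [hnk] at hi
          simp only [hjseq]
          split_ifs <;> omega)
        (by rw [hnk]; simp only [hjseq]; rw [if_neg (by omega)])
      rw [hnk] at hineq
      have hsum : 0 ≤ ∑ i ∈ Finset.range (m - 1),
          (Y (jseq i + i) (jseq i) - Y (jseq (i+1) + i) (jseq (i+1))) := by
        apply Finset.sum_nonneg
        intro i hi
        rw [Finset.mem_range] at hi
        have hji : jseq i = n - i := by simp only [hjseq]; rw [if_pos hi]
        by_cases hcase : i + 1 < m - 1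
        · have hji1 : jseq (i+1) = n - (i+1) := by simp only [hjseq]; rw [if_pos hcase]
          rw [hji, hji1]
          have h4 : n - i + i = n := by omega
          have h5 : n - (i+1) + i = n - 1 := by omega
          rw [h4, h5]
          have h6 := (hY.1.2 (n-1) (n - (i+1)) (by omega) (by omega) (by omega)).2
          have h7 : n - 1 + 1 = n := by omega
          have h8 : n - (i + 1) + 1 = n - i := by omega
          rw [h7, h8] at h6
          omega
        · have hieq : i = m - 2 := by omega
          have hji1 : jseq (i+1) = 1 := by simp only [hjseq]; rw [if_neg (by omega)]
          rw [hji, hji1]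
          have h4 : n - i + i = n := by omega
          rw [h4]
          have hd := gt_diag_s7 hY.1 (1 + i) 1 (n - 1 - i) le_rfl (by omega) (by omega)
          have h5 : 1 + i + (n - 1 - i) = n := by omega
          have h6 : 1 + (n - 1 - i) = n - i := by omega
          rw [h5, h6] at hd
          omega
      have hlast : jseq (m - 1) = 1 := by simp only [hjseq]; rw [if_neg (by omega)]
      rw [hlast] at hineq
      have h9 : 1 + (m - 1) = m := by omega
      rw [h9] at hineq
      have h10 : ((k : ℕ) : ℤ) = (n : ℤ) - m + 1 := by omega
      omega

lemma col_sub_gogam (n : ℕ) : ColumnSeqs n ⊆ LeftGogamTrapezoids n 1 := by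
  rintro X ⟨hpos, hmono, hbd, hz⟩
  set Y : ℕ → ℕ → ℤ := fun i j => X (i - j + 1) 1 with hYdef
  have hYval : ∀ a b : ℕ, Y (a + b) a = X (b + 1) 1 := by
    intro a b
    simp only [hYdef]
    have : a + b - a + 1 = b + 1 := by omega
    rw [this]
  refine ⟨⟨Y, ⟨⟨?_, ?_⟩, ?_, ?_⟩, ?_⟩, hz⟩
  · intro i j h1 h2 h3
    exact hpos (i - j + 1) (by omega) (by omega)
  · intro i j h1 h2 h3
    constructor
    · simp only [hYdef]
      have h4 : i + 1 - j + 1 = (i - j + 1) + 1 := by omega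
      rw [h4]
      exact hmono (i - j + 1) (by omega) (by omega)
    · simp only [hYdef]
      have h4 : i + 1 - (j + 1) + 1 = i - j + 1 := by omega
      rw [h4]
  · simp only [hYdef]
    have h4 : n - n + 1 = 1 := by omega
    rw [h4]
    rcases Nat.eq_zero_or_pos n with h | h
    · subst h
      have h0 := hz 1 1 (by simp [LeftIdx])
      simp [h0]
    · have := hbd 1 le_rfl h
      push_cast at this ⊢
      omega
  · intro k hk1 hk2 jf hj0 hdec hj1
    have hsum : (∑ i ∈ Finset.range (n - k),
        (Y (jf i + i) (jf i) - Y (jf (i+1) + i) (jf (i+1)))) = 0 := by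
      apply Finset.sum_eq_zero
      intro i _
      rw [hYval (jf i) i, hYval (jf (i+1)) i]
      ring
    rw [hsum, hYval (jf (n-k)) (n-k), zero_add]
    have := hbd (n - k + 1) (by omega) (by omega)
    have h10 : ((n - k + 1 : ℕ) : ℤ) = (n : ℤ) - k + 1 := by omega
    omega
  · rintro i j ⟨ha, hb, hc, hd⟩
    have hj : j = 1 := le_antisymm hd ha
    subst hj
    simp only [hYdef]
    have h4 : i - 1 + 1 = i := by omega
    rw [h4]


def SeqN (n : ℕ) : Set (ℕ → ℕ) :=
  {a | (∀ t, 1 ≤ t → t ≤ n → 1 ≤ a t ∧ a t ≤ t) ∧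
    (∀ t, 1 ≤ t → t + 1 ≤ n → a t ≤ a (t+1)) ∧
    ∀ t, ¬(1 ≤ t ∧ t ≤ n) → a t = 0}

lemma seqN_mono {n : ℕ} {a : ℕ → ℕ} (ha : a ∈ SeqN n) (s d : ℕ)
    (h1 : 1 ≤ s) (h2 : s + d ≤ n) : a s ≤ a (s + d) := by
  induction d with
  | zero => simp
  | succ d ih =>
    have h4 := ha.2.1 (s + d) (by omega) (by omega)
    have h5 : s + (d + 1) = s + d + 1 := by omega
    rw [h5]
    exact le_trans (ih (by omega)) h4

lemma seqN_finite (n : ℕ) : (SeqN n).Finite := by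
  classical
  set F : (ℕ → ℕ) → (Fin (n+1) → Fin (n+1)) :=
    fun a t => ⟨if a t ≤ n then a t else 0, by split <;> omega⟩ with hF
  apply Set.Finite.of_finite_image (f := F) (Set.toFinite _)
  intro a ha b hb hab
  funext t
  by_cases ht : 1 ≤ t ∧ t ≤ n
  · have hat : a t ≤ n := le_trans (ha.1 t ht.1 ht.2).2 ht.2
    have hbt : b t ≤ n := le_trans (hb.1 t ht.1 ht.2).2 ht.2
    have := congrFun hab ⟨t, by omega⟩
    simp only [hF, Fin.mk.injEq, if_pos hat, if_pos hbt] at this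
    exact this
  · rw [ha.2.2 t ht, hb.2.2 t ht]

lemma ncard_sprod {α β : Type*} (s : Set α) (t : Set β) :
    (s ×ˢ t).ncard = s.ncard * t.ncard := by
  rw [← Nat.card_coe_set_eq, ← Nat.card_coe_set_eq, ← Nat.card_coe_set_eq,
    ← Nat.card_prod]
  exact Nat.card_congr (Equiv.Set.prod s t)

lemma ncard_biUnion {α β : Type*} (s : Finset β) (f : β → Set α)
    (hfin : ∀ b ∈ s, (f b).Finite)
    (hdis : ∀ b1 ∈ s, ∀ b2 ∈ s, b1 ≠ b2 → Disjoint (f b1) (f b2)) :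
    (⋃ b ∈ s, f b).ncard = ∑ b ∈ s, (f b).ncard := by
  classical
  induction s using Finset.induction with
  | empty => simp
  | @insert x s hx ih =>
    rw [Finset.sum_insert hx]
    have hbu : (⋃ b ∈ insert x s, f b) = f x ∪ ⋃ b ∈ s, f b := by
      simp [Set.biUnion_insert]
    rw [hbu, Set.ncard_union_eq ?_ ?_ ?_,
      ih (fun b hb => hfin b (Finset.mem_insert_of_mem hb))
        (fun b1 h1 b2 h2 hne => hdis b1 (Finset.mem_insert_of_mem h1)
          b2 (Finset.mem_insert_of_mem h2) hne)]
    · simp only [Set.disjoint_iUnion_right]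
      intro b hb
      exact hdis x (Finset.mem_insert_self x s) b (Finset.mem_insert_of_mem hb)
        (by rintro rfl; exact hx hb)
    · exact hfin x (Finset.mem_insert_self x s)
    · exact Set.Finite.biUnion s.finite_toSet
        (fun b hb => hfin b (Finset.mem_insert_of_mem hb))

def glueP (N m : ℕ) (p : (ℕ → ℕ) × (ℕ → ℕ)) : ℕ → ℕ := fun t =>
  if t < m then p.1 t else if t = m then m else if t ≤ N then p.2 (t - m) + m - 1 else 0

lemma glue_mem {N m : ℕ} (hm1 : 1 ≤ m) (hm2 : m ≤ N) {b c : ℕ → ℕ}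
    (hb : b ∈ SeqN (m-1)) (hc : c ∈ SeqN (N-m)) :
    glueP N m (b, c) ∈ SeqN N ∧
      Nat.findGreatest (fun t => glueP N m (b, c) t = t) N = m := by
  set g := glueP N m (b, c) with hg
  have hgval : ∀ t, g t = if t < m then b t else if t = m then m
      else if t ≤ N then c (t - m) + m - 1 else 0 := fun t => rfl
  have hbounds : ∀ t, 1 ≤ t → t ≤ N → 1 ≤ g t ∧ g t ≤ t := by
    intro t h1 h2
    rw [hgval]
    rcases Nat.lt_trichotomy t m with h | h | h
    · rw [if_pos h]
      exact hb.1 t h1 (by omega)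
    · rw [if_neg (by omega), if_pos h]
      omega
    · rw [if_neg (by omega), if_neg (by omega), if_pos h2]
      have := hc.1 (t - m) (by omega) (by omega)
      omega
  refine ⟨⟨hbounds, ?_, ?_⟩, ?_⟩
  · intro t h1 h2
    rcases Nat.lt_trichotomy t m with h | h | h
    · have e1 : g t = b t := by rw [hgval, if_pos h]
      rcases Nat.lt_or_ge (t+1) m with h' | h'
      · have e2 : g (t+1) = b (t+1) := by rw [hgval, if_pos h']
        rw [e1, e2]
        exact hb.2.1 t h1 (by omega)
      · have ht1 : t + 1 = m := by omega
        have e2 : g (t+1) = m := by rw [hgval, if_neg (by omega), if_pos ht1]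
        have := hb.1 t h1 (by omega)
        rw [e1, e2]
        omega
    · have e1 : g t = m := by rw [hgval, if_neg (by omega), if_pos h]
      have e2 : g (t+1) = c 1 + m - 1 := by
        rw [hgval, if_neg (by omega), if_neg (by omega), if_pos h2,
          show t + 1 - m = 1 by omega]
      have := hc.1 1 le_rfl (by omega)
      rw [e1, e2]
      omega
    · have e1 : g t = c (t - m) + m - 1 := by
        rw [hgval, if_neg (by omega), if_neg (by omega), if_pos (by omega)]
      have e2 : g (t+1) = c (t - m + 1) + m - 1 := by
        rw [hgval, if_neg (by omega), if_neg (by omega), if_pos (by omega),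
          show t + 1 - m = t - m + 1 by omega]
      have h4 := hc.2.1 (t - m) (by omega) (by omega)
      have h5 := hc.1 (t - m) (by omega) (by omega)
      rw [e1, e2]
      omega
  · intro t ht
    rw [hgval]
    rcases Nat.lt_trichotomy t m with h | h | h
    · rw [if_pos h]
      exact hb.2.2 t (by omega)
    · omega
    · rw [if_neg (by omega), if_neg (by omega), if_neg (by omega)]
  · rw [Nat.findGreatest_eq_iff]
    refine ⟨hm2, fun _ => ?_, ?_⟩
    · rw [hgval, if_neg (by omega), if_pos rfl]
    · intro t h1 h2 hP
      rw [hgval, if_neg (by omega), if_neg (by omega), if_pos h2] at hP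
      have := hc.1 (t - m) (by omega) (by omega)
      omega

lemma split_mem {N m : ℕ} {a : ℕ → ℕ} (hN : 1 ≤ N) (ha : a ∈ SeqN N)
    (hm : Nat.findGreatest (fun t => a t = t) N = m) :
    1 ≤ m ∧ m ≤ N ∧
    (fun t => if 1 ≤ t ∧ t ≤ m - 1 then a t else 0) ∈ SeqN (m-1) ∧
    (fun s => if 1 ≤ s ∧ s ≤ N - m then a (s + m) + 1 - m else 0) ∈ SeqN (N-m) ∧
    glueP N m ((fun t => if 1 ≤ t ∧ t ≤ m - 1 then a t else 0),
      (fun s => if 1 ≤ s ∧ s ≤ N - m then a (s + m) + 1 - m else 0)) = a := by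
  have ha1 : a 1 = 1 := by
    have := ha.1 1 le_rfl hN
    omega
  have hm1 : 1 ≤ m := hm ▸ Nat.le_findGreatest hN ha1
  have hm2 : m ≤ N := hm ▸ Nat.findGreatest_le N
  have ham : a m = m := by
    have := Nat.findGreatest_spec (P := fun t => a t = t) hN ha1
    rwa [hm] at this
  have hgt : ∀ t, m < t → t ≤ N → a t ≠ t := by
    intro t h1 h2
    exact Nat.findGreatest_is_greatest (P := fun t => a t = t) (by rw [hm]; exact h1) h2
  have hge : ∀ t, m ≤ t → t ≤ N → m ≤ a t := by
    intro t h1 h2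
    have := seqN_mono ha m (t - m) hm1 (by omega)
    have h4 : m + (t - m) = t := by omega
    rw [h4] at this
    omega
  refine ⟨hm1, hm2, ⟨?_, ?_, ?_⟩, ⟨?_, ?_, ?_⟩, ?_⟩
  · intro t h1 h2
    beta_reduce
    rw [if_pos ⟨h1, h2⟩]
    exact ha.1 t h1 (by omega)
  · intro t h1 h2
    beta_reduce
    rw [if_pos ⟨h1, by omega⟩, if_pos ⟨by omega, h2⟩]
    exact ha.2.1 t h1 (by omega)
  · intro t ht
    beta_reduce
    rw [if_neg ht]
  · intro s h1 h2
    beta_reduce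
    rw [if_pos ⟨h1, h2⟩]
    have h3 := hge (s + m) (by omega) (by omega)
    have h4 := (ha.1 (s + m) (by omega) (by omega)).2
    have h5 := hgt (s + m) (by omega) (by omega)
    omega
  · intro s h1 h2
    beta_reduce
    rw [if_pos ⟨h1, by omega⟩, if_pos ⟨by omega, h2⟩]
    have h3 := ha.2.1 (s + m) (by omega) (by omega)
    have h4 := hge (s + m) (by omega) (by omega)
    have h5 : s + 1 + m = s + m + 1 := by omega
    rw [h5]
    omega
  · intro s hs
    beta_reduce
    rw [if_neg hs]
  · funext t
    show (if t < m then (if 1 ≤ t ∧ t ≤ m - 1 then a t else 0)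
      else if t = m then m
      else if t ≤ N then (if 1 ≤ t - m ∧ t - m ≤ N - m then a (t - m + m) + 1 - m else 0) + m - 1
      else 0) = a t
    rcases Nat.lt_trichotomy t m with h | h | h
    · rw [if_pos h]
      by_cases ht : 1 ≤ t
      · rw [if_pos ⟨ht, by omega⟩]
      · rw [if_neg (by omega)]
        rw [ha.2.2 t (by omega)]
    · rw [if_neg (by omega), if_pos h, h, ham]
    · rw [if_neg (by omega), if_neg (by omega)]
      by_cases ht : t ≤ N
      · rw [if_pos ht, if_pos ⟨by omega, by omega⟩,
          show t - m + m = t by omega]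
        have := hge t (by omega) ht
        omega
      · rw [if_neg ht]
        rw [ha.2.2 t (by omega)]

theorem seqN_ncard (n : ℕ) : (SeqN n).ncard = catalan n := by
  induction n using Nat.strong_induction_on with
  | _ n ih =>
    rcases n with _ | n
    · have h0 : SeqN 0 = {fun _ => 0} := by
        ext a
        simp only [SeqN, Set.mem_setOf_eq, Set.mem_singleton_iff]
        constructor
        · rintro ⟨-, -, hz⟩
          funext t
          exact hz t (by omega)
        · rintro rfl
          exact ⟨fun t h1 h2 => by omega, fun t h1 h2 => by omega, fun t ht => rfl⟩
      rw [h0, Set.ncard_singleton, catalan_zero]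
    · classical
      set N := n + 1 with hN
      set E : ℕ → Set (ℕ → ℕ) := fun m =>
        {a | a ∈ SeqN N ∧ Nat.findGreatest (fun t => a t = t) N = m} with hE
      have hcover : SeqN N = ⋃ m ∈ Finset.Icc 1 N, E m := by
        ext a
        simp only [Set.mem_iUnion, hE, Set.mem_setOf_eq, Finset.mem_Icc, exists_prop]
        constructor
        · intro ha
          obtain ⟨hm1, hm2, -⟩ := split_mem (by omega) ha rfl
          exact ⟨_, ⟨hm1, hm2⟩, ha, rfl⟩
        · rintro ⟨m, -, ha, -⟩
          exact ha
      have hEfin : ∀ m, (E m).Finite := fun m =>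
        (seqN_finite N).subset (fun a ha => ha.1)
      have hEcard : ∀ m ∈ Finset.Icc 1 N, (E m).ncard = catalan (m-1) * catalan (N-m) := by
        intro m hm
        rw [Finset.mem_Icc] at hm
        have himg : E m = glueP N m '' ((SeqN (m-1)) ×ˢ (SeqN (N-m))) := by
          ext a
          simp only [hE, Set.mem_setOf_eq, Set.mem_image, Set.mem_prod, Prod.exists]
          constructor
          · rintro ⟨ha, hfg⟩
            obtain ⟨hm1, hm2, hb, hc, hglue⟩ := split_mem (by omega) ha hfg
            exact ⟨_, _, ⟨hb, hc⟩, hglue⟩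
          · rintro ⟨b, c, ⟨hb, hc⟩, rfl⟩
            exact glue_mem hm.1 hm.2 hb hc
        have hinj : Set.InjOn (glueP N m) ((SeqN (m-1)) ×ˢ (SeqN (N-m))) := by
          rintro ⟨b, c⟩ ⟨hb0, hc0⟩ ⟨b', c'⟩ ⟨hb0', hc0'⟩ heq
          have hb : b ∈ SeqN (m-1) := hb0
          have hc : c ∈ SeqN (N-m) := hc0
          have hb' : b' ∈ SeqN (m-1) := hb0'
          have hc' : c' ∈ SeqN (N-m) := hc0'
          have hval : ∀ t, glueP N m (b, c) t = glueP N m (b', c') t :=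
            fun t => congrFun heq t
          have hbb : b = b' := by
            funext t
            by_cases ht : 1 ≤ t ∧ t ≤ m - 1
            · have h5 := hval t
              simp only [glueP] at h5
              rw [if_pos (show t < m by omega), if_pos (show t < m by omega)] at h5
              exact h5
            · rw [hb.2.2 t ht, hb'.2.2 t ht]
          have hcc : c = c' := by
            funext s
            by_cases hs : 1 ≤ s ∧ s ≤ N - m
            · have h5 := hval (s + m)
              simp only [glueP] at h5
              rw [if_neg (show ¬ s + m < m by omega), if_neg (show ¬ s + m = m by omega),
                if_pos (show s + m ≤ N by omega), if_neg (show ¬ s + m < m by omega),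
                if_neg (show ¬ s + m = m by omega), if_pos (show s + m ≤ N by omega),
                show s + m - m = s by omega] at h5
              omega
            · rw [hc.2.2 s hs, hc'.2.2 s hs]
          rw [Prod.mk.injEq]
          exact ⟨hbb, hcc⟩
        rw [himg, Set.ncard_image_of_injOn hinj, ncard_sprod,
          ih (m-1) (by omega), ih (N-m) (by omega)]
      have hdisj : ∀ m1 ∈ Finset.Icc 1 N, ∀ m2 ∈ Finset.Icc 1 N,
          m1 ≠ m2 → Disjoint (E m1) (E m2) := by
        intro m1 _ m2 _ hne
        rw [Set.disjoint_left]
        rintro a ⟨-, h1⟩ ⟨-, h2⟩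
        exact hne (by rw [← h1, h2])
      rw [hcover, ncard_biUnion _ _ (fun m _ => hEfin m) hdisj,
        Finset.sum_congr rfl hEcard]
      rw [catalan_succ, Fin.sum_univ_eq_sum_range (fun i => catalan i * catalan (n - i)) (n+1)]
      rw [show Finset.Icc 1 N = Finset.Ico 1 (N+1) by rw [Finset.Ico_add_one_right_eq_Icc]]
      rw [Finset.sum_Ico_eq_sum_range]
      apply Finset.sum_congr (by congr 1)
      intro i hi
      rw [Finset.mem_range] at hi
      rw [show 1 + i - 1 = i by omega, show N - (1 + i) = n - i by omega]


lemma col_ncard (n : ℕ) (hn : 1 ≤ n) : (ColumnSeqs n).ncard = catalan n := by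
  classical
  set F : (ℕ → ℕ → ℤ) → (ℕ → ℕ) :=
    fun X t => if 1 ≤ t ∧ t ≤ n then (X (n+1-t) 1).toNat else 0 with hF
  have himg : SeqN n = F '' ColumnSeqs n := by
    ext a
    constructor
    · intro ha
      refine ⟨fun i j => if j = 1 ∧ 1 ≤ i ∧ i ≤ n then (a (n+1-i) : ℤ) else 0,
        ⟨?_, ?_, ?_, ?_⟩, ?_⟩
      · intro i h1 h2
        beta_reduce
        rw [if_pos ⟨rfl, h1, h2⟩]
        have := (ha.1 (n+1-i) (by omega) (by omega)).1
        omega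
      · intro i h1 h2
        beta_reduce
        rw [if_pos ⟨rfl, by omega, h2⟩, if_pos ⟨rfl, h1, by omega⟩]
        have h3 := ha.2.1 (n-i) (by omega) (by omega)
        have h4 : n + 1 - i = n - i + 1 := by omega
        have h5 : n + 1 - (i + 1) = n - i := by omega
        rw [h4, h5]
        exact_mod_cast h3
      · intro j h1 h2
        beta_reduce
        rw [if_pos ⟨rfl, h1, h2⟩]
        have := (ha.1 (n+1-j) (by omega) (by omega)).2
        omega
      · intro i j hij
        beta_reduce
        rw [if_neg (by intro ⟨hj, hi1, hi2⟩; exact hij ⟨by omega, by omega, hi2, by omega⟩)]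
      · funext t
        by_cases ht : 1 ≤ t ∧ t ≤ n
        · show (if 1 ≤ t ∧ t ≤ n then
              (if (1:ℕ) = 1 ∧ 1 ≤ n+1-t ∧ n+1-t ≤ n then ((a (n+1-(n+1-t)) : ℤ)) else 0).toNat
            else 0) = a t
          rw [if_pos ht, if_pos ⟨rfl, by omega, by omega⟩,
            show n + 1 - (n + 1 - t) = t by omega]
          exact Int.toNat_natCast (a t)
        · show (if 1 ≤ t ∧ t ≤ n then
              (if (1:ℕ) = 1 ∧ 1 ≤ n+1-t ∧ n+1-t ≤ n then ((a (n+1-(n+1-t)) : ℤ)) else 0).toNat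
            else 0) = a t
          rw [if_neg ht, ha.2.2 t ht]
    · rintro ⟨X, hX, rfl⟩
      refine ⟨?_, ?_, ?_⟩
      · intro t h1 h2
        simp only [hF]
        rw [if_pos ⟨h1, h2⟩]
        have hp := hX.1 (n+1-t) (by omega) (by omega)
        have hb := hX.2.2.1 (n+1-t) (by omega) (by omega)
        constructor
        · omega
        · have : X (n+1-t) 1 ≤ (t : ℤ) := by omega
          omega
      · intro t h1 h2
        simp only [hF]
        rw [if_pos ⟨h1, by omega⟩, if_pos ⟨by omega, h2⟩]
        have h3 := hX.2.1 (n-t) (by omega) (by omega)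
        have h4 : n + 1 - t = n - t + 1 := by omega
        have h5 : n + 1 - (t + 1) = n - t := by omega
        rw [h4, h5]
        exact Int.toNat_le_toNat h3
      · intro t ht
        simp only [hF]
        rw [if_neg ht]
  have hinj : Set.InjOn F (ColumnSeqs n) := by
    intro X hX X' hX' heq
    funext i j
    by_cases hij : LeftIdx n 1 i j
    · obtain ⟨h1, h2, h3, h4⟩ := hij
      have hj : j = 1 := le_antisymm h4 h1
      subst hj
      have h5 := congrFun heq (n+1-i)
      simp only [hF] at h5
      rw [if_pos ⟨by omega, by omega⟩, if_pos ⟨by omega, by omega⟩,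
        show n + 1 - (n + 1 - i) = i by omega] at h5
      have hp := hX.1 i (by omega) h3
      have hp' := hX'.1 i (by omega) h3
      omega
    · rw [hX.2.2.2 i j hij, hX'.2.2.2 i j hij]
  rw [← seqN_ncard n, himg, Set.ncard_image_of_injOn hinj]

/-- The `(n,1)` left Gog and the `(n,1)` left GOGAm trapezoids both coincide with the
set of nondecreasing sequences `X n 1, ..., X 1 1` of positive integers with
`X j 1 ≤ n - j + 1`; in particular the identity is a bijection between them, and they
are counted by the Catalan number `C n`. -/
theorem stmt7 (n : ℕ) (hn : 1 ≤ n) :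
    LeftGogTrapezoids n 1 = ColumnSeqs n ∧
    LeftGogamTrapezoids n 1 = ColumnSeqs n ∧
    (ColumnSeqs n).ncard = catalan n := by
  exact ⟨Set.Subset.antisymm (gog_sub_col n) (col_sub_gog n),
    Set.Subset.antisymm (gogam_sub_col n) (col_sub_gogam n), col_ncard n hn⟩
end

section
/- Let X = (X_{i,j}), with n ≥ i ≥ j ≥ 1 and j ≤ 2, be an array of positive integers satisfying the Gelfand-Tsetlin inequalities on these indices (X_{i+1,1} ≤ X_{i,1} ≤ X_{i+1,2} and X_{i+1,2} ≤ X_{i,2} whenever defined). Then X is an (n,2) left GOGAm trapezoid if and only if for all 2 ≤ i ≤ n one has X_{i,2} ≤ n−i+2 and X_{i,2} − X_{i−1,1} + X_{i,1} ≤ n−i+1. -/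
lemma diag_le (n : ℕ) (Y : ℕ → ℕ → ℤ) (h : IsGT n Y) (t a b : ℕ)
    (hb : 1 ≤ b) (hba : b ≤ a) (han : a + t ≤ n) : Y a b ≤ Y (a+t) (b+t) := by
  induction t with
  | zero => simp
  | succ t ih =>
    have h1 := ih (by omega)
    have h2 := (h.2 (a+t) (b+t) (by omega) (by omega) (by omega)).2
    calc Y a b ≤ Y (a+t) (b+t) := h1
    _ ≤ Y (a+t+1) (b+t+1) := h2

lemma step_le (n : ℕ) (Y : ℕ → ℕ → ℤ) (h : IsGT n Y) (c b t : ℕ)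
    (hc : 1 ≤ c) (hcb : c ≤ b) (hbn : b + t ≤ n) : Y (c + t) c ≤ Y (b + t) b := by
  obtain ⟨d, rfl⟩ : ∃ d, b = c + d := ⟨b - c, by omega⟩
  have h1 := diag_le n Y h d (c+t) c hc (by omega) (by omega)
  rwa [show c + t + d = c + d + t by omega] at h1

/-- sequence for the first family of inequalities -/
def seqA (n i : ℕ) : ℕ → ℕ := fun t => if t < i - 2 then n - t else 2

/-- sequence for the second family of inequalities -/
def seqB (n i : ℕ) : ℕ → ℕ :=
  fun t => if t < i - 2 then n - t else if t < i - 1 then 2 else 1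

/-- sequence for the case `i = 2` -/
def seqC (n : ℕ) : ℕ → ℕ := fun t => if t = 0 then n else 1

lemma seqC_zero (n : ℕ) : seqC n 0 = n := rfl

lemma seqC_succ (n t : ℕ) : seqC n (t+1) = 1 := rfl

/-- the extension of a two-column trapezoid to a full triangle -/
def ext2 (X : ℕ → ℕ → ℤ) : ℕ → ℕ → ℤ :=
  fun i j => if j ≤ 1 then X i 1 else X (i - j + 2) 2

lemma ext2_one (X : ℕ → ℕ → ℤ) (i : ℕ) : ext2 X i 1 = X i 1 := by
  simp [ext2]

lemma ext2_ge (X : ℕ → ℕ → ℤ) (i j : ℕ) (h : 2 ≤ j) :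
    ext2 X i j = X (i - j + 2) 2 := by
  simp only [ext2]
  rw [if_neg (by omega)]

lemma ext2_shift (X : ℕ → ℕ → ℤ) (b t : ℕ) (h : 2 ≤ b) :
    ext2 X (b + t) b = X (t + 2) 2 := by
  rw [ext2_ge X _ _ h, show b + t - b + 2 = t + 2 by omega]

/-- Characterization of `(n,2)` left GOGAm trapezoids: a two-column Gelfand-Tsetlin
trapezoid extends to a GOGAm triangle of size `n` iff `X i 2 ≤ n - i + 2` and
`X i 2 - X (i-1) 1 + X i 1 ≤ n - i + 1` for all `2 ≤ i ≤ n`. -/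
theorem stmt8 (n : ℕ) (hn : 2 ≤ n) (X : ℕ → ℕ → ℤ)
    (hpos : ∀ i j, 1 ≤ j → j ≤ i → i ≤ n → j ≤ 2 → 1 ≤ X i j)
    (hGT1 : ∀ i, 1 ≤ i → i + 1 ≤ n → X (i+1) 1 ≤ X i 1 ∧ X i 1 ≤ X (i+1) 2)
    (hGT2 : ∀ i, 2 ≤ i → i + 1 ≤ n → X (i+1) 2 ≤ X i 2) :
    (∃ Y : ℕ → ℕ → ℤ, IsGogam n Y ∧
        ∀ i j, 1 ≤ j → j ≤ i → i ≤ n → j ≤ 2 → X i j = Y i j) ↔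
    (∀ i, 2 ≤ i → i ≤ n →
      X i 2 ≤ (n : ℤ) - i + 2 ∧ X i 2 - X (i-1) 1 + X i 1 ≤ (n : ℤ) - i + 1) := by
  constructor
  · -- forward direction
    rintro ⟨Y, ⟨hYGT, hYnn, hYsum⟩, hXY⟩ i h2i hin
    have hX22 : X i 2 = Y i 2 := hXY i 2 (by omega) h2i hin (by omega)
    constructor
    · -- X i 2 ≤ n - i + 2
      rcases eq_or_lt_of_le h2i with h2 | h3
      · -- i = 2 : use diagonal monotonicity up to Y n n ≤ n
        have hd := diag_le n Y hYGT (n-2) 2 2 (by omega) le_rfl (by omega)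
        rw [show 2 + (n-2) = n by omega] at hd
        rw [hX22, ← h2]
        push_cast
        linarith
      · -- i ≥ 3
        have h3i : 3 ≤ i := h3
        set k := n - i + 2 with hk
        have hnk : n - k = i - 2 := by omega
        have hs := hYsum k (by omega) (by omega) (seqA n i)
          (by simp only [seqA]; rw [if_pos (by omega)]; omega)
          (by
            intro t ht
            simp only [seqA]
            split_ifs <;> omega)
          (by
            rw [hnk]
            simp only [seqA]
            split_ifs <;> omega)
        rw [hnk] at hs
        have hsum : 0 ≤ ∑ t ∈ Finset.range (i-2),
            (Y (seqA n i t + t) (seqA n i t) - Y (seqA n i (t+1) + t) (seqA n i (t+1))) := by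
          apply Finset.sum_nonneg
          intro t ht
          rw [Finset.mem_range] at ht
          have hjt : seqA n i t = n - t := by simp only [seqA]; rw [if_pos ht]
          rw [sub_nonneg]
          apply step_le n Y hYGT
          · simp only [seqA]; split_ifs <;> omega
          · simp only [seqA]; split_ifs <;> omega
          · omega
        have hlast : seqA n i (i-2) = 2 := by
          simp only [seqA]; rw [if_neg (by omega)]
        rw [hlast, show 2 + (i-2) = i by omega] at hs
        rw [hX22]
        have hkc : (k : ℤ) = (n : ℤ) - i + 2 := by omega
        linarith
    · -- X i 2 - X (i-1) 1 + X i 1 ≤ n - i + 1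
      rcases eq_or_lt_of_le h2i with h2 | h3
      · -- i = 2
        subst h2
        set k := n - 1 with hk
        have hnk : n - k = 1 := by omega
        have hs := hYsum k (by omega) (by omega) (seqC n)
          (seqC_zero n)
          (by
            intro t ht
            rw [hnk] at ht
            have ht0 : t = 0 := by omega
            subst ht0
            rw [seqC_succ, seqC_zero]
            omega)
          (by rw [hnk, seqC_succ])
        rw [hnk] at hs
        rw [Finset.sum_range_one] at hs
        rw [seqC_zero, show (1:ℕ) = 0 + 1 from rfl, seqC_succ] at hs
        have hd := diag_le n Y hYGT (n-2) 2 2 (by omega) le_rfl (by omega)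
        rw [show 2 + (n-2) = n by omega] at hd
        have e1 : X 1 1 = Y 1 1 := hXY 1 1 le_rfl le_rfl (by omega) (by omega)
        have e2 : X 2 1 = Y 2 1 := hXY 2 1 le_rfl (by omega) hn (by omega)
        have hkc : (k : ℤ) = (n : ℤ) - 1 := by omega
        rw [hX22]
        simp only [Nat.add_zero] at hs
        norm_num at hs ⊢
        linarith
      · -- i ≥ 3
        have h3i : 3 ≤ i := h3
        set k := n - i + 1 with hk
        have hnk : n - k = i - 1 := by omega
        have hs := hYsum k (by omega) (by omega) (seqB n i)
          (by simp only [seqB]; rw [if_pos (by omega)]; omega)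
          (by
            intro t ht
            simp only [seqB]
            split_ifs <;> omega)
          (by
            rw [hnk]
            simp only [seqB]
            split_ifs <;> omega)
        rw [hnk] at hs
        rw [show i - 1 = (i-2) + 1 by omega, Finset.sum_range_succ] at hs
        have hsum : 0 ≤ ∑ t ∈ Finset.range (i-2),
            (Y (seqB n i t + t) (seqB n i t) - Y (seqB n i (t+1) + t) (seqB n i (t+1))) := by
          apply Finset.sum_nonneg
          intro t ht
          rw [Finset.mem_range] at ht
          rw [sub_nonneg]
          apply step_le n Y hYGT
          · simp only [seqB]; split_ifs <;> omega
          · simp only [seqB]; split_ifs <;> omega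
          · simp only [seqB]; split_ifs <;> omega
        have hv2 : seqB n i (i-2) = 2 := by
          simp only [seqB]; rw [if_neg (by omega), if_pos (by omega)]
        have hv1 : seqB n i (i-2+1) = 1 := by
          simp only [seqB]; rw [if_neg (by omega), if_neg (by omega)]
        rw [hv2, hv1, show 2 + (i-2) = i by omega, show 1 + (i-2) = i - 1 by omega,
          show 1 + (i-2+1) = i by omega] at hs
        have e1 : X (i-1) 1 = Y (i-1) 1 := hXY (i-1) 1 le_rfl (by omega) (by omega) (by omega)
        have e2 : X i 1 = Y i 1 := hXY i 1 le_rfl (by omega) hin (by omega)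
        have hkc : (k : ℤ) = (n : ℤ) - i + 1 := by omega
        rw [hX22, e1, e2]
        linarith
  · -- backward direction: construct the extension
    intro h
    refine ⟨ext2 X, ⟨⟨?_, ?_⟩, ?_, ?_⟩, ?_⟩
    · -- positivity
      intro i j h1 hji hin
      rcases Nat.lt_or_ge j 2 with hj | hj
      · have : j = 1 := by omega
        subst this
        rw [ext2_one]
        exact hpos i 1 le_rfl (by omega) hin (by omega)
      · rw [ext2_ge X i j hj]
        exact hpos (i-j+2) 2 (by omega) (by omega) (by omega) le_rfl
    · -- GT inequalities
      intro i j h1 hji hin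
      rcases Nat.lt_or_ge j 2 with hj | hj
      · have : j = 1 := by omega
        subst this
        constructor
        · rw [ext2_one, ext2_one]
          exact (hGT1 i (by omega) hin).1
        · rw [ext2_one, ext2_ge X (i+1) 2 le_rfl, show i + 1 - 2 + 2 = i + 1 by omega]
          exact (hGT1 i (by omega) hin).2
      · constructor
        · rw [ext2_ge X (i+1) j hj, ext2_ge X i j hj,
            show i + 1 - j + 2 = (i - j + 2) + 1 by omega]
          exact hGT2 (i-j+2) (by omega) (by omega)
        · rw [ext2_ge X i j hj, ext2_ge X (i+1) (j+1) (by omega),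
            show i + 1 - (j+1) + 2 = i - j + 2 by omega]
    · -- Y n n ≤ n
      rw [ext2_ge X n n hn, show n - n + 2 = 2 by omega]
      have := (h 2 le_rfl hn).1
      push_cast at this
      linarith
    · -- GOGAm inequalities
      intro k hk1 hk2 j hj0 hdec hlast
      set m := n - k with hm
      have hchain : ∀ d t, t + d ≤ m → j (t + d) + d ≤ j t := by
        intro d
        induction d with
        | zero => intro t _; simp
        | succ d ih =>
          intro t ht
          have h1 := ih t (by omega)
          have h2 := hdec (t + d) (by omega)
          have : t + (d+1) = (t + d) + 1 := by omega
          rw [this]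
          omega
      have hub : ∀ t, t ≤ m → j t + t ≤ n := by
        intro t ht
        have := hchain t 0 (by omega)
        simp only [Nat.zero_add] at this
        omega
      have hlb : ∀ t, t < m → 2 ≤ j t := by
        intro t ht
        have := hchain (m - t) t (by omega)
        rw [show t + (m - t) = m by omega] at this
        omega
      by_cases h2 : 2 ≤ j m
      · -- case j m ≥ 2: all terms vanish
        have hall : ∀ t, t ≤ m → 2 ≤ j t := by
          intro t ht
          rcases eq_or_lt_of_le ht with h' | h'
          · rw [h']; exact h2
          · exact hlb t h'
        have hzero : ∑ t ∈ Finset.range m,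
            (ext2 X (j t + t) (j t) - ext2 X (j (t+1) + t) (j (t+1))) = 0 := by
          apply Finset.sum_eq_zero
          intro t ht
          rw [Finset.mem_range] at ht
          rw [ext2_shift X (j t) t (hall t (by omega)),
            ext2_shift X (j (t+1)) t (hall (t+1) (by omega))]
          ring
        rw [hzero, ext2_shift X (j m) m h2, zero_add]
        have hmn : m + 2 ≤ n := by
          have := hub m le_rfl
          omega
        have := (h (m+2) (by omega) hmn).1
        have hkc : (k : ℤ) = (n : ℤ) - m := by omega
        push_cast at this
        linarith
      · -- case j m = 1
        have hjm : j m = 1 := by omega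
        have hm1 : 1 ≤ m := by omega
        obtain ⟨m', hm'⟩ : ∃ m', m = m' + 1 := ⟨m - 1, by omega⟩
        rw [hm', Finset.sum_range_succ]
        have hzero : ∑ t ∈ Finset.range m',
            (ext2 X (j t + t) (j t) - ext2 X (j (t+1) + t) (j (t+1))) = 0 := by
          apply Finset.sum_eq_zero
          intro t ht
          rw [Finset.mem_range] at ht
          rw [ext2_shift X (j t) t (hlb t (by omega)),
            ext2_shift X (j (t+1)) t (hlb (t+1) (by omega))]
          ring
        rw [hzero, zero_add]
        have hjm' : j (m' + 1) = 1 := by rw [← hm']; exact hjm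
        have hjm2 : 2 ≤ j m' := hlb m' (by omega)
        rw [hjm', ext2_shift X (j m') m' hjm2, ext2_one, ext2_one,
          show 1 + m' = m' + 1 by omega, show 1 + (m'+1) = m' + 2 by omega]
        have hmn : m' + 2 ≤ n := by omega
        have := (h (m'+2) (by omega) hmn).2
        rw [show m' + 2 - 1 = m' + 1 by omega] at this
        have hkc : (k : ℤ) = (n : ℤ) - m' - 1 := by omega
        push_cast at this
        linarith
    · -- agreement on the trapezoid
      intro i j h1 hji hin hj2
      rcases Nat.lt_or_ge j 2 with hj | hj
      · have : j = 1 := by omega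
        subst this
        rw [ext2_one]
      · have : j = 2 := by omega
        subst this
        rw [ext2_ge X i 2 le_rfl, show i - 2 + 2 = i by omega]
end

section
/- Let X be a Gog triangle of size n with μ(X) inversions and ν(X) coinversions. Then (μ(X), ν(X)) belongs to A_n; that is, there exists k with 0 ≤ k ≤ n−1 such that μ(X) ≥ k(k+1)/2, ν(X) ≥ (n−k−1)(n−k)/2, and μ(X) + ν(X) ≤ n(n−1)/2. -/
open Finset

private lemma gauss_aux (k : ℕ) : 2 * (∑ j ∈ range k, (k - j)) = k * (k + 1) := by
  induction k with
  | zero => simp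
  | succ k ih =>
    have h : ∑ j ∈ range (k+1), (k+1-j) = (∑ j ∈ range k, (k-j)) + (k+1) := by
      rw [Finset.sum_range_succ]
      have h2 : ∀ j ∈ range k, (k+1-j) = (k-j)+1 := by
        intro j hj; have := mem_range.mp hj; omega
      rw [Finset.sum_congr rfl h2, Finset.sum_add_distrib, Finset.sum_const, card_range,
        smul_eq_mul]
      omega
    have h3 : (k+1) * (k+1+1) = k * (k+1) + 2*(k+1) := by ring
    omega

private lemma count_zeros (M : ℕ) (t : ℕ → ℤ) (h0 : ∀ m, m < M → 0 ≤ t m) :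
    (M : ℤ) - (∑ m ∈ range M, t m) ≤ (((range M).filter (fun m => t m = 0)).card : ℤ) := by
  classical
  have hsplit : ((range M).filter (fun m => t m = 0)).card
      + ((range M).filter (fun m => ¬ t m = 0)).card = M := by
    rw [Finset.card_filter_add_card_filter_not, card_range]
  have hsum : (∑ m ∈ range M, t m)
      = (∑ m ∈ (range M).filter (fun m => t m = 0), t m)
        + ∑ m ∈ (range M).filter (fun m => ¬ t m = 0), t m :=
    (Finset.sum_filter_add_sum_filter_not _ _ _).symm
  have h1 : (∑ m ∈ (range M).filter (fun m => t m = 0), t m) = 0 :=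
    Finset.sum_eq_zero (fun m hm => (mem_filter.mp hm).2)
  have h2 : ((((range M).filter (fun m => ¬ t m = 0)).card : ℤ))
      ≤ ∑ m ∈ (range M).filter (fun m => ¬ t m = 0), t m := by
    have := Finset.card_nsmul_le_sum ((range M).filter (fun m => ¬ t m = 0)) t 1
      (fun m hm => by
        have h3 := mem_filter.mp hm
        have h4 := h0 m (mem_range.mp h3.1)
        omega)
    simpa using this
  have hcast : (((range M).filter (fun m => t m = 0)).card : ℤ)
      + (((range M).filter (fun m => ¬ t m = 0)).card : ℤ) = (M : ℤ) := by
    exact_mod_cast congrArg (Nat.cast : ℕ → ℤ) hsplit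
  linarith [hsum, h1, h2, hcast]


/-- The pair (number of inversions, number of coinversions) of a Gog triangle of size
`n` belongs to `A_n = ∪_k A_{n,k}`. -/
theorem stmt11 (n : ℕ) (X : ℕ → ℕ → ℤ) (hX : IsGog n X) :
    ∃ k : ℕ, k ≤ n - 1 ∧
      k * (k + 1) / 2 ≤ invCount n X ∧
      (n - k - 1) * (n - k) / 2 ≤ coinvCount n X ∧
      invCount n X + coinvCount n X ≤ n * (n - 1) / 2 := by
  classical
  obtain ⟨⟨hpos, hGT⟩, hstrict, htop⟩ := hX
  -- Finset versions of the two counts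
  set invF : Finset (ℕ × ℕ) := (range n ×ˢ range n).filter
    (fun p => 1 ≤ p.2 ∧ p.2 ≤ p.1 ∧ p.1 + 1 ≤ n ∧ X p.1 p.2 = X (p.1+1) p.2) with hinvF
  set coinvF : Finset (ℕ × ℕ) := (range n ×ˢ range n).filter
    (fun p => 1 ≤ p.2 ∧ p.2 ≤ p.1 ∧ p.1 + 1 ≤ n ∧ X p.1 p.2 = X (p.1+1) (p.2+1)) with hcoinvF
  have hinv : invCount n X = invF.card := by
    rw [invCount, ← Set.ncard_coe_finset]
    congr 1
    ext p
    simp only [hinvF, coe_filter, mem_product, mem_range, Set.mem_setOf_eq, mem_coe]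
    constructor
    · rintro ⟨h1, h2, h3, h4⟩; exact ⟨⟨by omega, by omega⟩, h1, h2, h3, h4⟩
    · rintro ⟨-, h⟩; exact h
  have hcoinv : coinvCount n X = coinvF.card := by
    rw [coinvCount, ← Set.ncard_coe_finset]
    congr 1
    ext p
    simp only [hcoinvF, coe_filter, mem_product, mem_range, Set.mem_setOf_eq, mem_coe]
    constructor
    · rintro ⟨h1, h2, h3, h4⟩; exact ⟨⟨by omega, by omega⟩, h1, h2, h3, h4⟩
    · rintro ⟨-, h⟩; exact h
  rcases Nat.eq_zero_or_pos n with hn0 | hn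
  · subst hn0
    have h1 : invF = ∅ := by simp [hinvF]
    have h2 : coinvF = ∅ := by simp [hcoinvF]
    exact ⟨0, by omega, by simp [hinv, h1], by simp [hcoinv, h2], by simp [hinv, hcoinv, h1, h2]⟩
  -- total bound: invF and coinvF are disjoint subsets of the cell set
  have hdisj : Disjoint invF coinvF := by
    rw [Finset.disjoint_left]
    intro p hp hq
    simp only [hinvF, mem_filter] at hp
    simp only [hcoinvF, mem_filter] at hq
    obtain ⟨-, h1, h2, h3, h4⟩ := hp
    obtain ⟨-, -, -, -, h5⟩ := hq
    have h6 := hstrict (p.1+1) p.2 h1 (by omega) h3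
    omega
  have hcell : invF.card + coinvF.card ≤ n * (n-1) / 2 := by
    set cellF := (range n).biUnion (fun i => (Icc 1 i).image (fun j => (i, j))) with hcellF
    have hsub : invF ∪ coinvF ⊆ cellF := by
      intro p hp
      have hp' : (1 ≤ p.2 ∧ p.2 ≤ p.1 ∧ p.1 + 1 ≤ n) := by
        rcases mem_union.mp hp with h | h
        · simp only [hinvF, mem_filter] at h; exact ⟨h.2.1, h.2.2.1, h.2.2.2.1⟩
        · simp only [hcoinvF, mem_filter] at h; exact ⟨h.2.1, h.2.2.1, h.2.2.2.1⟩
      simp only [hcellF, mem_biUnion, mem_image, mem_range, mem_Icc]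
      exact ⟨p.1, by omega, p.2, by omega, rfl⟩
    have hcard : cellF.card * 2 = n * (n-1) := by
      rw [hcellF, Finset.card_biUnion]
      · have h1 : ∀ i ∈ range n, ((Icc 1 i).image (fun j => (i, j))).card = i := by
          intro i _
          rw [Finset.card_image_of_injective _ (fun a b h => (Prod.mk.injEq _ _ _ _).mp h |>.2),
            Nat.card_Icc]
          omega
        rw [Finset.sum_congr rfl h1]
        exact Finset.sum_range_id_mul_two n
      · intro x hx y hy hxy
        rw [Function.onFun, Finset.disjoint_left]
        intro p hp hq
        simp only [mem_image, mem_Icc] at hp hq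
        obtain ⟨a, -, ha⟩ := hp
        obtain ⟨b, -, hb⟩ := hq
        rw [← ha] at hb
        exact hxy ((Prod.mk.injEq _ _ _ _).mp hb).1.symm
    have h2 := Finset.card_le_card hsub
    rw [Finset.card_union_of_disjoint hdisj] at h2
    omega
  -- basic GT bounds
  have hub : ∀ d r j, r + d = n → 1 ≤ j → j ≤ r → X r j ≤ (j:ℤ) + d := by
    intro d
    induction d with
    | zero =>
      intro r j h h1 h2
      have hr : r = n := by omega
      subst hr
      rw [htop j h1 (by omega)]
      simp
    | succ d ih =>
      intro r j h h1 h2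
      have h3 : X r j ≤ X (r+1) (j+1) := (hGT r j h1 h2 (by omega)).2
      have h4 := ih (r+1) (j+1) (by omega) (by omega) (by omega)
      push_cast at h4 ⊢
      linarith
  have hlb : ∀ d r j, r + d = n → 1 ≤ j → j ≤ r → (j:ℤ) ≤ X r j := by
    intro d
    induction d with
    | zero =>
      intro r j h h1 h2
      have hr : r = n := by omega
      subst hr
      rw [htop j h1 (by omega)]
    | succ d ih =>
      intro r j h h1 h2
      have h3 : X (r+1) j ≤ X r j := (hGT r j h1 h2 (by omega)).1
      have h4 := ih (r+1) j (by omega) h1 (by omega)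
      linarith
  -- column piece bound
  have colBound : ∀ j r, 1 ≤ j → j ≤ r → r ≤ n →
      ((n - r : ℕ):ℤ) - (X r j - (j:ℤ)) ≤
        ((((range (n-r)).filter (fun m => X (r+m) j - X (r+m+1) j = 0))).card : ℤ) := by
    intro j r h1 h2 h3
    have ht : ∀ m, m < n - r → 0 ≤ X (r+m) j - X (r+m+1) j := by
      intro m hm
      have := (hGT (r+m) j h1 (by omega) (by omega)).1
      linarith
    have hsum : ∑ m ∈ range (n-r), (X (r+m) j - X (r+m+1) j) = X r j - (j:ℤ) := by
      have h4 := Finset.sum_range_sub' (fun m => X (r+m) j) (n-r)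
      simp only [← Nat.add_assoc] at h4
      rw [h4, show r + (n-r) = n by omega, Nat.add_zero, htop j h1 (by omega)]
    have h5 := count_zeros (n-r) _ ht
    rw [hsum] at h5
    exact h5
  -- diagonal piece bound
  have diagBound : ∀ j r, 1 ≤ j → j ≤ r → r ≤ n →
      X r j - (j:ℤ) ≤
        ((((range (n-r)).filter
          (fun m => X (r+m+1) (j+m+1) - X (r+m) (j+m) = 0))).card : ℤ) := by
    intro j r h1 h2 h3
    have ht : ∀ m, m < n - r → 0 ≤ X (r+m+1) (j+m+1) - X (r+m) (j+m) := by
      intro m hm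
      have := (hGT (r+m) (j+m) (by omega) (by omega) (by omega)).2
      linarith
    have hsum : ∑ m ∈ range (n-r), (X (r+m+1) (j+m+1) - X (r+m) (j+m))
        = ((j:ℤ) + ((n - r : ℕ):ℤ)) - X r j := by
      have h4 := Finset.sum_range_sub (fun m => X (r+m) (j+m)) (n-r)
      simp only [← Nat.add_assoc] at h4
      rw [h4, show r + (n-r) = n by omega, Nat.add_zero, Nat.add_zero,
        htop (j + (n-r)) (by omega) (by omega)]
      push_cast
      ring
    have h5 := count_zeros (n-r) _ ht
    rw [hsum] at h5
    linarith
  -- the quantity u j and q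
  set u : ℕ → ℕ := fun j => (Icc j n).sup (fun r => ((n:ℤ) - r + ((j:ℤ) - X r j)).toNat)
    with hu
  have hA : ∀ j r, j ≤ r → r ≤ n → (n:ℤ) - r + ((j:ℤ) - X r j) ≤ (u j : ℤ) := by
    intro j r hjr hrn
    have h1 : ((n:ℤ) - r + ((j:ℤ) - X r j)).toNat ≤ u j := by
      simp only [hu]
      exact Finset.le_sup (f := fun r => ((n:ℤ) - r + ((j:ℤ) - X r j)).toNat)
        (mem_Icc.mpr ⟨hjr, hrn⟩)
    exact le_trans (Int.self_le_toNat _) (Nat.cast_le.mpr h1)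
  have hB : ∀ j, 1 ≤ j → j ≤ n →
      ∃ r, j ≤ r ∧ r ≤ n ∧ (u j : ℤ) ≤ (n:ℤ) - r + ((j:ℤ) - X r j) := by
    intro j h1 h2
    obtain ⟨r₀, hr₀, hval⟩ := Finset.exists_mem_eq_sup (Icc j n) ⟨n, mem_Icc.mpr ⟨h2, le_rfl⟩⟩
      (fun r => ((n:ℤ) - r + ((j:ℤ) - X r j)).toNat)
    rw [mem_Icc] at hr₀
    by_cases hp : 0 ≤ (n:ℤ) - r₀ + ((j:ℤ) - X r₀ j)
    · refine ⟨r₀, hr₀.1, hr₀.2, ?_⟩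
      have : (u j : ℤ) = (((n:ℤ) - r₀ + ((j:ℤ) - X r₀ j)).toNat : ℤ) := by
        simp only [hu]; exact_mod_cast congrArg (Nat.cast : ℕ → ℤ) hval
      rw [this, Int.toNat_of_nonneg hp]
    · refine ⟨n, h2, le_rfl, ?_⟩
      have h0 : u j = 0 := by
        simp only [hu]
        rw [hval, Int.toNat_of_nonpos (by omega)]
      rw [h0, htop j h1 h2]
      simp
  have hqne : (Icc 1 n).Nonempty := ⟨1, mem_Icc.mpr ⟨le_rfl, hn⟩⟩
  set q : ℕ := (Icc 1 n).inf' hqne (fun j => j + u j) with hqdef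
  have hq_le : ∀ j, 1 ≤ j → j ≤ n → q ≤ j + u j := by
    intro j h1 h2
    exact Finset.inf'_le _ (mem_Icc.mpr ⟨h1, h2⟩)
  obtain ⟨j', hj'mem, hq_eq⟩ := Finset.exists_mem_eq_inf' hqne (fun j => j + u j)
  rw [mem_Icc] at hj'mem
  rw [← hqdef] at hq_eq
  have hq1 : 1 ≤ q := by rw [hq_eq]; omega
  set k : ℕ := min (q-1) (n-1) with hk
  -- μ bound
  have hB' : ∀ j, ∃ r, 1 ≤ j → j ≤ n →
      (j ≤ r ∧ r ≤ n ∧ (u j : ℤ) ≤ (n:ℤ) - r + ((j:ℤ) - X r j)) := by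
    intro j
    by_cases h : 1 ≤ j ∧ j ≤ n
    · obtain ⟨r, h1, h2, h3⟩ := hB j h.1 h.2
      exact ⟨r, fun _ _ => ⟨h1, h2, h3⟩⟩
    · exact ⟨n, fun ha hb => absurd ⟨ha, hb⟩ h⟩
  choose R hR using hB'
  have hmu : k * (k+1) ≤ 2 * invF.card := by
    have hcol : ∀ j, j < k →
        k - j ≤ (((range (n - R (j+1))).filter
          (fun m => X (R (j+1)+m) (j+1) - X (R (j+1)+m+1) (j+1) = 0)).card) := by
      intro j hj
      obtain ⟨ha, hb, hc⟩ := hR (j+1) (by omega) (by omega)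
      have h1 := colBound (j+1) (R (j+1)) (by omega) ha hb
      have h2 : (q:ℤ) ≤ ((j:ℤ)+1) + (u (j+1) : ℤ) := by
        have := hq_le (j+1) (by omega) (by omega)
        exact_mod_cast this
      have hkq : (k:ℤ) ≤ (q:ℤ) - 1 := by
        have := min_le_left (q-1) (n-1)
        omega
      have h3 : ((n - R (j+1) : ℕ):ℤ) = (n:ℤ) - (R (j+1)) := by omega
      have goal : ((k - j : ℕ):ℤ) ≤ (((range (n - R (j+1))).filter
          (fun m => X (R (j+1)+m) (j+1) - X (R (j+1)+m+1) (j+1) = 0)).card : ℤ) := by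
        rw [h3] at h1
        push_cast [Nat.cast_sub (le_of_lt hj)]
        push_cast at hc h1
        linarith
      exact_mod_cast goal
    set B := (range k).biUnion (fun j => ((range (n - R (j+1))).filter
      (fun m => X (R (j+1)+m) (j+1) - X (R (j+1)+m+1) (j+1) = 0)).image
        (fun m => (R (j+1) + m, j+1))) with hBdef
    have hBsub : B ⊆ invF := by
      intro p hp
      simp only [hBdef, mem_biUnion, mem_image, mem_filter, mem_range] at hp
      obtain ⟨j, hj, m, ⟨hm, heq⟩, rfl⟩ := hp
      obtain ⟨ha, hb, -⟩ := hR (j+1) (by omega) (by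
        have := min_le_right (q-1) (n-1); omega)
      simp only [hinvF, mem_filter, mem_product, mem_range]
      refine ⟨⟨by omega, by omega⟩, by omega, by omega, by omega, by omega⟩
    have hBcard : B.card = ∑ j ∈ range k, (((range (n - R (j+1))).filter
        (fun m => X (R (j+1)+m) (j+1) - X (R (j+1)+m+1) (j+1) = 0)).card) := by
      rw [hBdef, Finset.card_biUnion]
      · refine Finset.sum_congr rfl (fun j _ => ?_)
        exact Finset.card_image_of_injective _ (fun a b h => by
          have := (Prod.mk.injEq _ _ _ _).mp h
          omega)
      · intro x hx y hy hxy
        rw [Function.onFun, Finset.disjoint_left]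
        intro p hp hq
        simp only [mem_image] at hp hq
        obtain ⟨a, -, ha⟩ := hp
        obtain ⟨b, -, hb⟩ := hq
        rw [← ha] at hb
        have h1 := ((Prod.mk.injEq _ _ _ _).mp hb).2
        omega
    have hsum : ∑ j ∈ range k, (k - j) ≤ invF.card := by
      calc ∑ j ∈ range k, (k - j)
          ≤ ∑ j ∈ range k, (((range (n - R (j+1))).filter
            (fun m => X (R (j+1)+m) (j+1) - X (R (j+1)+m+1) (j+1) = 0)).card) :=
            Finset.sum_le_sum (fun j hj => hcol j (mem_range.mp hj))
        _ = B.card := hBcard.symm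
        _ ≤ invF.card := Finset.card_le_card hBsub
    have := gauss_aux k
    omega
  -- ν bound
  set b : ℕ := n - 1 - k with hbdef
  have hnu : b * (b+1) ≤ 2 * coinvF.card := by
    rcases Nat.eq_zero_or_pos b with hb0 | hbpos
    · simp [hb0]
    have hkq : k = q - 1 := by
      have h1 := min_le_left (q-1) (n-1)
      have h2 := min_le_right (q-1) (n-1)
      omega
    have hqn : q ≤ n := by omega
    have hj'q : j' ≤ q := by omega
    have hdiag : ∀ c, c < b →
        b - c ≤ (((range (n - (j' + c))).filter
          (fun m => X (j'+c+m+1) (j'+m+1) - X (j'+c+m) (j'+m) = 0)).card) := by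
      intro c hc
      have hrn : j' + c ≤ n := by omega
      have h1 := diagBound j' (j' + c) (by omega) (by omega) hrn
      have h2 := hA j' (j' + c) (by omega) hrn
      have goal : ((b - c : ℕ):ℤ) ≤ (((range (n - (j' + c))).filter
          (fun m => X (j'+c+m+1) (j'+m+1) - X (j'+c+m) (j'+m) = 0)).card : ℤ) := by
        have h3 : ((b - c : ℕ):ℤ) = (b:ℤ) - c := by omega
        have h4 : (b:ℤ) = (n:ℤ) - q := by omega
        have h5 : (q:ℤ) = (j':ℤ) + (u j' : ℤ) := by exact_mod_cast hq_eq
        push_cast at h1 h2 ⊢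
        linarith
      exact_mod_cast goal
    set B' := (range b).biUnion (fun c => ((range (n - (j' + c))).filter
      (fun m => X (j'+c+m+1) (j'+m+1) - X (j'+c+m) (j'+m) = 0)).image
        (fun m => (j' + c + m, j' + m))) with hB'def
    have hBsub : B' ⊆ coinvF := by
      intro p hp
      simp only [hB'def, mem_biUnion, mem_image, mem_filter, mem_range] at hp
      obtain ⟨c, hc, m, ⟨hm, heq⟩, rfl⟩ := hp
      simp only [hcoinvF, mem_filter, mem_product, mem_range]
      refine ⟨⟨by omega, by omega⟩, by omega, by omega, by omega, by omega⟩
    have hBcard : B'.card = ∑ c ∈ range b, (((range (n - (j' + c))).filter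
        (fun m => X (j'+c+m+1) (j'+m+1) - X (j'+c+m) (j'+m) = 0)).card) := by
      rw [hB'def, Finset.card_biUnion]
      · refine Finset.sum_congr rfl (fun c _ => ?_)
        exact Finset.card_image_of_injective _ (fun a b h => by
          have := (Prod.mk.injEq _ _ _ _).mp h
          omega)
      · intro x hx y hy hxy
        rw [Function.onFun, Finset.disjoint_left]
        intro p hp hq
        simp only [mem_image] at hp hq
        obtain ⟨a, -, ha⟩ := hp
        obtain ⟨c, -, hc⟩ := hq
        rw [← ha] at hc
        have h1 := (Prod.mk.injEq _ _ _ _).mp hc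
        omega
    have hsum : ∑ c ∈ range b, (b - c) ≤ coinvF.card := by
      calc ∑ c ∈ range b, (b - c)
          ≤ ∑ c ∈ range b, (((range (n - (j' + c))).filter
            (fun m => X (j'+c+m+1) (j'+m+1) - X (j'+c+m) (j'+m) = 0)).card) :=
            Finset.sum_le_sum (fun c hc => hdiag c (mem_range.mp hc))
        _ = B'.card := hBcard.symm
        _ ≤ coinvF.card := Finset.card_le_card hBsub
    have := gauss_aux b
    omega
  -- conclusion
  refine ⟨k, ?_, ?_, ?_, ?_⟩
  · exact min_le_right _ _
  · rw [hinv]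
    omega
  · rw [hcoinv]
    have h1 : n - k - 1 = b := by omega
    have h2 : n - k = b + 1 := by
      have := min_le_right (q-1) (n-1)
      omega
    rw [h1, h2]
    omega
  · rw [hinv, hcoinv]
    exact hcell
end

section
/- Let n ≥ 1 and let (i,j) be a pair of nonnegative integers belonging to A_n, i.e. there exists k with 0 ≤ k ≤ n−1 such that i ≥ k(k+1)/2, j ≥ (n−k−1)(n−k)/2, and i+j ≤ n(n−1)/2. Then there exists a Gog triangle of size n with exactly i inversions and exactly j coinversions. -/
namespace GogAux12


lemma two_dvd_tri (m : ℕ) : 2 * (m * (m+1) / 2) = m * (m+1) :=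
  Nat.mul_div_cancel' (even_iff_two_dvd.mp (Nat.even_mul_succ_self m))

/-- auxiliary Gauss-type sum -/
lemma sum_Icc_rev (m : ℕ) : ∑ j ∈ Finset.Icc 1 m, (m + 1 - j) = m * (m+1) / 2 := by
  induction m with
  | zero => simp
  | succ m ih =>
    rw [Finset.sum_Icc_succ_top (by omega)]
    have h1 : ∑ j ∈ Finset.Icc 1 m, (m + 1 + 1 - j) = (∑ j ∈ Finset.Icc 1 m, (m + 1 - j)) + m := by
      rw [Finset.sum_congr rfl (g := fun j => (m + 1 - j) + 1) (fun j hj => by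
        simp only [Finset.mem_Icc] at hj; show m+1+1-j = m+1-j+1; omega)]
      rw [Finset.sum_add_distrib, Finset.sum_const, Nat.card_Icc]
      simp
    rw [h1, ih]
    have e1 := two_dvd_tri m
    have e2 := two_dvd_tri (m+1)
    have e3 : (m+1) * (m+1+1) = m * (m+1) + 2*(m+1) := by ring
    omega


/-- The triangle entries minus column index. -/
def C (n k t : ℕ) (d b : ℕ → ℕ) (i j : ℕ) : ℕ :=
  if j + t ≤ i + d j then 0
  else if k + 1 ≤ j + b (i - j + 1) then n - i
  else j + t - i

structure Good (n k t : ℕ) (d b : ℕ → ℕ) : Prop where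
  hn : k + t + 1 = n
  hd0 : ∀ j, k < j → d j = 0
  hdm : ∀ j, 1 ≤ j → d (j+1) ≤ d j
  hdt : ∀ j, 1 ≤ j → d j ≤ t
  hbm : ∀ w, 1 ≤ w → b (w+1) ≤ b w
  hbk : ∀ w, b w ≤ k
  hdis : ∀ j w, 1 ≤ w → w ≤ t → t + 1 ≤ d j + w → j + b w ≤ k

variable {n k t : ℕ} {d b : ℕ → ℕ}

/-- vertical comparison and inversion criterion -/
lemma C_down (G : Good n k t d b) {i j : ℕ} (h1 : 1 ≤ j) (hji : j ≤ i) (hi : i + 1 ≤ n) :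
    C n k t d b (i+1) j ≤ C n k t d b i j ∧
      (C n k t d b i j = C n k t d b (i+1) j ↔ j + t ≤ i + d j) := by
  have hw : i + 1 - j + 1 = (i - j + 1) + 1 := by omega
  have hbm := G.hbm (i - j + 1) (by omega)
  have hn := G.hn
  unfold C
  rw [hw]
  by_cases c1 : j + t ≤ i + d j
  · have c1' : j + t ≤ i + 1 + d j := by omega
    simp [c1, c1']
  · by_cases c2 : k + 1 ≤ j + b (i - j + 1)
    · -- C i j = n - i ≥ 1
      by_cases c1' : j + t ≤ i + 1 + d j
      · rw [if_neg c1, if_pos c2, if_pos c1']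
        omega
      · by_cases c2' : k + 1 ≤ j + b (i - j + 1 + 1)
        · simp only [if_neg c1, if_pos c2, if_neg c1', if_pos c2']
          omega
        · simp only [if_neg c1, if_pos c2, if_neg c1', if_neg c2']
          -- C (i+1) j = j + t - (i+1), and j ≤ k from ¬c2'
          omega
    · -- C i j = j + t - i ≥ 1
      by_cases c1' : j + t ≤ i + 1 + d j
      · simp only [if_neg c1, if_neg c2, if_pos c1']
        omega
      · have c2' : ¬ (k + 1 ≤ j + b (i - j + 1 + 1)) := by omega
        simp only [if_neg c1, if_neg c2, if_neg c1', if_neg c2']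
        omega

/-- diagonal comparison and coinversion criterion -/
lemma C_diag (G : Good n k t d b) {i j : ℕ} (h1 : 1 ≤ j) (hji : j ≤ i) (hi : i + 1 ≤ n) :
    C n k t d b i j ≤ C n k t d b (i+1) (j+1) + 1 ∧
      (C n k t d b i j = C n k t d b (i+1) (j+1) + 1 ↔
        (i + d j + 1 ≤ j + t ∧ k + 1 ≤ j + b (i - j + 1))) := by
  have hw : i + 1 - (j + 1) + 1 = i - j + 1 := by omega
  have hdm := G.hdm j h1
  have hn := G.hn
  have hbk := G.hbk (i - j + 1)
  unfold C
  rw [hw]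
  by_cases c1 : j + t ≤ i + d j
  · rw [if_pos c1]
    have : ¬ (i + d j + 1 ≤ j + t) := by omega
    simp [this]
  · rw [if_neg c1]
    by_cases c2 : k + 1 ≤ j + b (i - j + 1)
    · rw [if_pos c2]
      have c1' : ¬ (j + 1 + t ≤ i + 1 + d (j+1)) := by
        intro hcon
        have := G.hdis (j+1) (i - j + 1) (by omega) (by omega) (by omega)
        omega
      have c2' : k + 1 ≤ j + 1 + b (i - j + 1) := by omega
      rw [if_neg c1', if_pos c2']
      omega
    · rw [if_neg c2]
      have c1' : ¬ (j + 1 + t ≤ i + 1 + d (j+1)) := by omega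
      rw [if_neg c1']
      by_cases c2' : k + 1 ≤ j + 1 + b (i - j + 1)
      · rw [if_pos c2']
        omega
      · rw [if_neg c2']
        omega

/-- row comparison (strictness of rows) -/
lemma C_row (G : Good n k t d b) {i j : ℕ} (h1 : 1 ≤ j) (hji : j + 1 ≤ i) (hi : i ≤ n) :
    C n k t d b i j ≤ C n k t d b i (j+1) := by
  have hw : i - (j + 1) + 1 = i - j := by omega
  have hdm := G.hdm j h1
  have hbm := G.hbm (i - j) (by omega)
  have hw2 : i - j + 1 = (i - j) + 1 := by omega
  have hn := G.hn
  unfold C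
  rw [hw]
  by_cases c1 : j + t ≤ i + d j
  · rw [if_pos c1]; omega
  · rw [if_neg c1]
    have c1' : ¬ (j + 1 + t ≤ i + d (j+1)) := by omega
    rw [if_neg c1']
    by_cases c2 : k + 1 ≤ j + b (i - j + 1)
    · rw [if_pos c2]
      have c2' : k + 1 ≤ j + 1 + b (i - j) := by rw [hw2] at c2; omega
      rw [if_pos c2']
    · rw [if_neg c2]
      by_cases c2' : k + 1 ≤ j + 1 + b (i - j)
      · rw [if_pos c2']
        omega
      · rw [if_neg c2']
        omega

/-- top row vanishes -/
lemma C_top (G : Good n k t d b) {j : ℕ} (h1 : 1 ≤ j) (hj : j ≤ n) :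
    C n k t d b n j = 0 := by
  have hn := G.hn
  unfold C
  by_cases c1 : j + t ≤ n + d j
  · rw [if_pos c1]
  · rw [if_neg c1]
    by_cases c2 : k + 1 ≤ j + b (n - j + 1)
    · rw [if_pos c2]; omega
    · rw [if_neg c2]; omega

noncomputable def X (n k t : ℕ) (d b : ℕ → ℕ) (i j : ℕ) : ℤ :=
  (j : ℤ) + C n k t d b i j

lemma isGog (G : Good n k t d b) (hn1 : 1 ≤ n) : IsGog n (X n k t d b) := by
  refine ⟨⟨?_, ?_⟩, ?_, ?_⟩
  · intro i j hj _ _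
    unfold X; omega
  · intro i j hj hji hi
    have h := C_down G hj hji hi
    have h2 := C_diag G hj hji hi
    unfold X; push_cast; omega
  · intro i j hj hji hi
    rcases Nat.eq_or_lt_of_le hi with rfl | hlt
    · have h1 := C_top G hj (by omega)
      have h2 := C_top G (j := j+1) (by omega) (by omega)
      unfold X; push_cast; omega
    · have h := C_row G hj hji (by omega)
      unfold X; push_cast; omega
  · intro j hj hjn
    have h := C_top G hj hjn
    unfold X; rw [h]; push_cast; omega

lemma invCount_eq (G : Good n k t d b) :
    invCount n (X n k t d b) = ∑ j ∈ Finset.Icc 1 k, (k + 1 - j + d j) := by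
  have hn := G.hn
  have hset : {p : ℕ × ℕ | 1 ≤ p.2 ∧ p.2 ≤ p.1 ∧ p.1 + 1 ≤ n ∧
      X n k t d b p.1 p.2 = X n k t d b (p.1+1) p.2}
      = ↑((Finset.Icc 1 k).biUnion
          (fun j => (Finset.Icc (j + (t - d j)) (n-1)).image (fun i => (i, j)))) := by
    ext ⟨a, c⟩
    simp only [Set.mem_setOf_eq, Finset.coe_biUnion, Set.mem_iUnion, Finset.mem_coe,
      Finset.mem_image, Finset.mem_Icc, Prod.mk.injEq]
    constructor
    · rintro ⟨h1, h2, h3, h4⟩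
      have hiff := (C_down G h1 h2 h3).2
      have hC : C n k t d b a c = C n k t d b (a+1) c := by
        unfold X at h4; omega
      have hcond := hiff.mp hC
      have hck : c ≤ k := by
        by_contra hck
        have := G.hd0 c (by omega)
        omega
      have hdt := G.hdt c h1
      exact ⟨c, ⟨h1, hck⟩, a, ⟨by omega, by omega⟩, rfl, rfl⟩
    · rintro ⟨j, ⟨hj1, hjk⟩, i2, ⟨hlo, hhi⟩, rfl, rfl⟩
      have hdt := G.hdt j hj1
      have h1 : j ≤ i2 := by omega
      have h3 : i2 + 1 ≤ n := by omega
      refine ⟨hj1, h1, h3, ?_⟩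
      have hiff := (C_down G hj1 h1 h3).2
      have hC : C n k t d b i2 j = C n k t d b (i2+1) j := hiff.mpr (by omega)
      unfold X; omega
  rw [invCount, hset, Set.ncard_coe_finset]
  rw [Finset.card_biUnion]
  · refine Finset.sum_congr rfl (fun j hj => ?_)
    simp only [Finset.mem_Icc] at hj
    rw [Finset.card_image_of_injective _ (fun x y hxy => by simpa using congrArg Prod.fst hxy),
      Nat.card_Icc]
    have hdt := G.hdt j hj.1
    omega
  · intro x hx y hy hxy
    rw [Function.onFun, Finset.disjoint_left]
    intro p hp hq
    simp only [Finset.mem_image] at hp hq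
    obtain ⟨i1, _, rfl⟩ := hp
    obtain ⟨i2, _, h⟩ := hq
    have : y = x := by simpa using (congrArg Prod.snd h)
    exact hxy this.symm

lemma coinvCount_eq (G : Good n k t d b) :
    coinvCount n (X n k t d b) = ∑ w ∈ Finset.Icc 1 t, (t + 1 - w + b w) := by
  have hn := G.hn
  have hset : {p : ℕ × ℕ | 1 ≤ p.2 ∧ p.2 ≤ p.1 ∧ p.1 + 1 ≤ n ∧
      X n k t d b p.1 p.2 = X n k t d b (p.1+1) (p.2+1)}
      = ↑((Finset.Icc 1 t).biUnion
          (fun w => (Finset.Icc ((k + w) - b w) (n-1)).image (fun i => (i, i + 1 - w)))) := by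
    ext ⟨a, c⟩
    simp only [Set.mem_setOf_eq, Finset.coe_biUnion, Set.mem_iUnion, Finset.mem_coe,
      Finset.mem_image, Finset.mem_Icc, Prod.mk.injEq]
    constructor
    · rintro ⟨h1, h2, h3, h4⟩
      have hiff := (C_diag G h1 h2 h3).2
      have hC : C n k t d b a c = C n k t d b (a+1) (c+1) + 1 := by
        unfold X at h4; omega
      obtain ⟨hc1, hc2⟩ := hiff.mp hC
      refine ⟨a - c + 1, ⟨by omega, by omega⟩, a, ⟨by omega, by omega⟩, rfl, by omega⟩
    · rintro ⟨w, ⟨hw1, hwt⟩, i2, ⟨hlo, hhi⟩, rfl, rfl⟩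
      have hbk := G.hbk w
      have h1 : 1 ≤ i2 + 1 - w := by omega
      have h2 : i2 + 1 - w ≤ i2 := by omega
      have h3 : i2 + 1 ≤ n := by omega
      have hiff := (C_diag G h1 h2 h3).2
      rw [show i2 - (i2 + 1 - w) + 1 = w from by omega] at hiff
      have hcond1 : k + 1 ≤ (i2 + 1 - w) + b w := by omega
      have hcond2 : i2 + d (i2 + 1 - w) + 1 ≤ (i2 + 1 - w) + t := by
        by_contra hcon
        have := G.hdis (i2 + 1 - w) w hw1 hwt (by omega)
        omega
      have hC := hiff.mpr ⟨hcond2, hcond1⟩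
      refine ⟨h1, h2, h3, ?_⟩
      unfold X; push_cast; omega
  rw [coinvCount, hset, Set.ncard_coe_finset]
  rw [Finset.card_biUnion]
  · refine Finset.sum_congr rfl (fun w hw => ?_)
    simp only [Finset.mem_Icc] at hw
    rw [Finset.card_image_of_injective _ (fun x y hxy => by simpa using congrArg Prod.fst hxy),
      Nat.card_Icc]
    have hbk := G.hbk w
    omega
  · intro x hx y hy hxy
    simp only [Finset.mem_coe, Finset.mem_Icc] at hx hy
    rw [Function.onFun, Finset.disjoint_left]
    intro p hp hq
    simp only [Finset.mem_image, Finset.mem_Icc] at hp hq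
    obtain ⟨i1, hi1, rfl⟩ := hp
    obtain ⟨i2, hi2, h⟩ := hq
    have hbx := G.hbk x
    have hby := G.hbk y
    have e1 : i2 = i1 := by simpa using congrArg Prod.fst h
    have e2 : i2 + 1 - y = i1 + 1 - x := by simpa using congrArg Prod.snd h
    exact hxy (by omega)

def dfun (k r q : ℕ) : ℕ → ℕ :=
  fun x => if 1 ≤ x ∧ x ≤ k then (if x ≤ r then q+1 else q) else 0

def bfun (k t q' r' : ℕ) : ℕ → ℕ :=
  fun w => if 1 ≤ w ∧ w ≤ t then (if w ≤ q' then k else if w = q'+1 then r' else 0) else 0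

variable {q r q' r' : ℕ}


lemma sum_dfun (hr : r < k) : ∑ x ∈ Finset.Icc 1 k, dfun k r q x = k * q + r := by
  rw [Finset.sum_congr rfl (g := fun x => if x ≤ r then q+1 else q) (fun x hx => by
    simp only [Finset.mem_Icc] at hx; unfold dfun; rw [if_pos ⟨hx.1, hx.2⟩])]
  rw [show Finset.Icc 1 k = Finset.Ioc 0 k from by rw [← Finset.Icc_add_one_left_eq_Ioc]; rfl]
  rw [← Finset.sum_Ioc_consecutive _ (Nat.zero_le r) (le_of_lt hr)]
  have h1 : ∑ x ∈ Finset.Ioc 0 r, (if x ≤ r then q+1 else q) = r * (q+1) := by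
    rw [Finset.sum_congr rfl (g := fun _ => q+1) (fun x hx => by
      simp only [Finset.mem_Ioc] at hx; rw [if_pos hx.2])]
    rw [Finset.sum_const, Nat.card_Ioc, smul_eq_mul]
    simp only [Nat.sub_zero]
  have h2 : ∑ x ∈ Finset.Ioc r k, (if x ≤ r then q+1 else q) = (k - r) * q := by
    rw [Finset.sum_congr rfl (g := fun _ => q) (fun x hx => by
      simp only [Finset.mem_Ioc] at hx; rw [if_neg (by omega)])]
    rw [Finset.sum_const, Nat.card_Ioc, smul_eq_mul]
  rw [h1, h2]
  obtain ⟨m, rfl⟩ : ∃ m, k = r + m := ⟨k - r, by omega⟩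
  rw [Nat.add_sub_cancel_left]; ring

lemma sum_bfun (hr' : r' < k) (hq't : q' ≤ t) (h5 : q' = t → r' = 0) :
    ∑ w ∈ Finset.Icc 1 t, bfun k t q' r' w = k * q' + r' := by
  rw [Finset.sum_congr rfl (g := fun w => if w ≤ q' then k else if w = q'+1 then r' else 0)
    (fun w hw => by
      simp only [Finset.mem_Icc] at hw; unfold bfun; rw [if_pos ⟨hw.1, hw.2⟩])]
  rw [show Finset.Icc 1 t = Finset.Ioc 0 t from by rw [← Finset.Icc_add_one_left_eq_Ioc]; rfl]
  rcases Nat.eq_or_lt_of_le hq't with rfl | hlt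
  · have h0 := h5 rfl
    rw [Finset.sum_congr rfl (g := fun _ => k) (fun w hw => by
      simp only [Finset.mem_Ioc] at hw; rw [if_pos hw.2])]
    rw [Finset.sum_const, Nat.card_Ioc, smul_eq_mul, h0, Nat.mul_comm]
    simp
  · rw [← Finset.sum_Ioc_consecutive _ (Nat.zero_le q') (le_of_lt hlt)]
    have h1 : ∑ w ∈ Finset.Ioc 0 q', (if w ≤ q' then k else if w = q'+1 then r' else 0)
        = q' * k := by
      rw [Finset.sum_congr rfl (g := fun _ => k) (fun w hw => by
        simp only [Finset.mem_Ioc] at hw; rw [if_pos hw.2])]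
      rw [Finset.sum_const, Nat.card_Ioc, smul_eq_mul]
      simp
    have h2 : ∑ w ∈ Finset.Ioc q' t, (if w ≤ q' then k else if w = q'+1 then r' else 0)
        = r' := by
      rw [← Finset.sum_Ioc_consecutive _ (Nat.le_succ q') hlt]
      have ha : ∑ w ∈ Finset.Ioc q' (q'+1), (if w ≤ q' then k else if w = q'+1 then r' else 0)
          = r' := by
        rw [Nat.Ioc_succ_singleton, Finset.sum_singleton, if_neg (by omega), if_pos rfl]
      have hb : ∑ w ∈ Finset.Ioc (q'+1) t, (if w ≤ q' then k else if w = q'+1 then r' else 0)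
          = 0 := by
        refine Finset.sum_eq_zero (fun w hw => ?_)
        simp only [Finset.mem_Ioc] at hw
        rw [if_neg (by omega), if_neg (by omega)]
      rw [ha, hb]
      omega
    rw [h1, h2]
    ring

lemma good_inst {n k t q r q' r' D G : ℕ} (hkt : k + t + 1 = n) (hk1 : 1 ≤ k)
    (hq : k * q + r = D) (hq' : k * q' + r' = G) (hr : r < k) (hr' : r' < k)
    (hDG : D + G ≤ k * t) : Good n k t (dfun k r q) (bfun k t q' r') := by
  have hexp1 : k * (q + q') = k * q + k * q' := by ring
  have hexp2 : k * (q + q' + 1) = k * q + k * q' + k := by ring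
  have hexp3 : k * (t + 1) = k * t + k := by ring
  refine ⟨hkt, ?_, ?_, ?_, ?_, ?_, ?_⟩
  · intro j hj; unfold dfun; rw [if_neg (by omega)]
  · intro j hj; unfold dfun; split_ifs <;> omega
  · intro j hj
    unfold dfun
    split_ifs with g1 g2
    · -- value q+1, r ≥ 1
      by_contra hcon
      have h2 : k * t ≤ k * q := Nat.mul_le_mul_left k (by omega)
      omega
    · by_contra hcon
      have h2 : k * (t+1) ≤ k * q := Nat.mul_le_mul_left k (by omega)
      omega
    · omega
  · intro w hw; unfold bfun; split_ifs <;> omega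
  · intro w; unfold bfun; split_ifs <;> omega
  · intro jj w hw1 hwt hsum
    unfold dfun at hsum
    unfold bfun
    by_cases g1 : 1 ≤ jj ∧ jj ≤ k
    · rw [if_pos g1] at hsum
      rw [if_pos (⟨hw1, hwt⟩ : 1 ≤ w ∧ w ≤ t)]
      by_cases g2 : jj ≤ r
      · rw [if_pos g2] at hsum
        by_cases g3 : w ≤ q'
        · exfalso
          have hmul : k * t ≤ k * (q + q') := Nat.mul_le_mul_left k (by omega)
          omega
        · rw [if_neg g3]
          by_cases g4 : w = q' + 1
          · rw [if_pos g4]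
            have hmul : k * t ≤ k * (q + q' + 1) := Nat.mul_le_mul_left k (by omega)
            omega
          · rw [if_neg g4]; omega
      · rw [if_neg g2] at hsum
        by_cases g3 : w ≤ q'
        · exfalso
          have hmul : k * (t + 1) ≤ k * (q + q') := Nat.mul_le_mul_left k (by omega)
          omega
        · rw [if_neg g3]
          by_cases g4 : w = q' + 1
          · rw [if_pos g4]
            have hmul : k * t ≤ k * (q + q') := Nat.mul_le_mul_left k (by omega)
            omega
          · rw [if_neg g4]; omega
    · rw [if_neg g1] at hsum
      omega

end GogAux12

open GogAux12

/-- For every pair `(i,j)` in `A_n` there is a Gog triangle of size `n` with exactly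
`i` inversions and `j` coinversions. -/
theorem stmt12 (n : ℕ) (hn : 1 ≤ n) (i j k : ℕ) (hk : k ≤ n - 1)
    (hi : k * (k + 1) / 2 ≤ i) (hj : (n - k - 1) * (n - k) / 2 ≤ j)
    (hij : i + j ≤ n * (n - 1) / 2) :
    ∃ X : ℕ → ℕ → ℤ, IsGog n X ∧ invCount n X = i ∧ coinvCount n X = j := by
  classical
  set t := n - 1 - k with ht
  have hkt : k + t + 1 = n := by omega
  have hj' : t * (t + 1) / 2 ≤ j := by
    rw [show n - k - 1 = t from by omega, show n - k = t + 1 from by omega] at hj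
    exact hj
  have ek := two_dvd_tri k
  have et := two_dvd_tri t
  have en : 2 * (n * (n - 1) / 2) = n * (n - 1) := by
    have h := two_dvd_tri (n - 1)
    rw [show (n - 1) + 1 = n from by omega] at h
    rw [Nat.mul_comm n (n - 1)]
    exact h
  have eid : n * (n - 1) = k * (k + 1) + t * (t + 1) + 2 * (k * t) := by
    rw [show n = k + t + 1 from by omega, Nat.add_sub_cancel]
    ring
  have hDG : (i - k * (k + 1) / 2) + (j - t * (t + 1) / 2) ≤ k * t := by omega
  rcases Nat.eq_zero_or_pos k with hk0 | hk1
  · -- trivial case k = 0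
    have e0 : k * (k + 1) = 0 := by simp [hk0]
    have e0t : k * t = 0 := by simp [hk0]
    have good : Good n k t (fun _ => 0) (fun _ => 0) := by
      refine ⟨hkt, fun _ _ => rfl, fun _ _ => le_refl _, fun _ _ => Nat.zero_le _,
        fun _ _ => le_refl _, fun _ => Nat.zero_le _, ?_⟩
      intro jj w h1 h2 h3
      omega
    refine ⟨X n k t (fun _ => 0) (fun _ => 0), isGog good hn, ?_, ?_⟩
    · rw [invCount_eq good]
      rw [show Finset.Icc 1 k = ∅ from by rw [hk0]; rfl, Finset.sum_empty]
      omega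
    · rw [coinvCount_eq good]
      rw [Finset.sum_congr rfl (g := fun w => t + 1 - w) (fun w hw => by simp)]
      rw [sum_Icc_rev t]
      omega
  · -- main case k ≥ 1
    set D := i - k * (k + 1) / 2 with hD
    set G := j - t * (t + 1) / 2 with hG
    have hq := Nat.div_add_mod D k
    have hq2 := Nat.div_add_mod G k
    have hr : D % k < k := Nat.mod_lt _ hk1
    have hr' : G % k < k := Nat.mod_lt _ hk1
    have good : Good n k t (dfun k (D % k) (D / k)) (bfun k t (G / k) (G % k)) :=
      good_inst hkt hk1 hq hq2 hr hr' hDG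
    refine ⟨X n k t _ _, isGog good hn, ?_, ?_⟩
    · rw [invCount_eq good, Finset.sum_add_distrib, sum_Icc_rev k, sum_dfun hr]
      omega
    · have hq't : G / k ≤ t := by
        by_contra hcon
        have h2 : k * (t + 1) ≤ k * (G / k) := Nat.mul_le_mul_left k (by omega)
        have h3 : k * (t + 1) = k * t + k := by ring
        omega
      have h5 : G / k = t → G % k = 0 := by
        intro he
        rw [he] at hq2
        omega
      rw [coinvCount_eq good, Finset.sum_add_distrib, sum_Icc_rev t, sum_bfun hr' hq't h5]
      omega
end

section
/- Let n ≥ 1 and 0 ≤ k ≤ n−1. There exists exactly one Gog triangle X of size n with exactly k(k+1)/2 inversions and exactly (n−k−1)(n−k)/2 coinversions; moreover its bottom entry satisfies X_{1,1} = n−k. -/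
namespace Gog13


/-- triangular number -/
def T (x : ℕ) : ℕ := ∑ i ∈ Finset.range (x+1), i

lemma T_succ (x : ℕ) : T (x+1) = T x + (x+1) := Finset.sum_range_succ _ _

lemma T_eq (x : ℕ) : T x = x * (x+1) / 2 := by
  unfold T; rw [Finset.sum_range_id]; simp [Nat.mul_comm]

lemma T_mono {a b : ℕ} (h : a ≤ b) : T a ≤ T b :=
  Finset.sum_le_sum_of_subset (Finset.range_subset_range.2 (by omega))

lemma T_le {a b : ℕ} (h : T a ≤ T b) : a ≤ b := by
  by_contra hc
  have : b + 1 ≤ a := by omega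
  have := T_mono this
  rw [T_succ] at this
  omega

/-- telescoping sum over Ico -/
lemma tele (f : ℕ → ℤ) {a b : ℕ} (h : a ≤ b) :
    ∑ i ∈ Finset.Ico a b, (f i - f (i+1)) = f a - f b := by
  induction b, h using Nat.le_induction with
  | base => simp
  | succ b hb ih => rw [Finset.sum_Ico_succ_top hb, ih]; ring

lemma card_ite1 (s : Finset ℕ) (P : ℕ → Prop) [DecidablePred P] :
    ∑ i ∈ s, (if P i then (1:ℤ) else 0) = ((s.filter P).card : ℤ) := by
  rw [Finset.card_filter, Nat.cast_sum]
  simp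

lemma card_ite0 (s : Finset ℕ) (P : ℕ → Prop) [DecidablePred P] :
    ∑ i ∈ s, (if P i then (0:ℤ) else 1) = (s.card : ℤ) - ((s.filter P).card : ℤ) := by
  have h1 : ∑ i ∈ s, (if P i then (0:ℤ) else 1) + ∑ i ∈ s, (if P i then (1:ℤ) else 0)
      = s.card := by
    rw [← Finset.sum_add_distrib]
    have : ∀ i ∈ s, (if P i then (0:ℤ) else 1) + (if P i then (1:ℤ) else 0) = 1 := by
      intro i _; by_cases h : P i <;> simp [h]
    rw [Finset.sum_congr rfl this]; simp
  rw [card_ite1] at h1; omega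

/-- sum of (b - j) for j in [a,b) -/
lemma SL1 {a b : ℕ} (h : a ≤ b) : ∑ j ∈ Finset.Ico a b, (b - j) = T (b - a) := by
  induction b, h using Nat.le_induction with
  | base => simp [T]
  | succ b hb ih =>
    rw [Finset.sum_Ico_succ_top (by omega)]
    have h2 : ∑ j ∈ Finset.Ico a b, (b + 1 - j) = ∑ j ∈ Finset.Ico a b, ((b - j) + 1) := by
      apply Finset.sum_congr rfl; intro j hj
      simp only [Finset.mem_Ico] at hj; omega
    rw [h2, Finset.sum_add_distrib, ih]
    simp only [Finset.sum_const, Nat.card_Ico, smul_eq_mul, mul_one]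
    have : b + 1 - a = (b - a) + 1 := by omega
    rw [this, T_succ]; omega

lemma SL2 (c N : ℕ) : ∑ s ∈ Finset.range N, (s - c) = T (N - 1 - c) := by
  induction N with
  | zero => simp [T]
  | succ N ih =>
    rw [Finset.sum_range_succ, ih]
    rcases le_or_gt N c with h | h
    · have h1 : N - c = 0 := by omega
      have h2 : N - 1 - c = 0 := by omega
      have h3 : N + 1 - 1 - c = 0 := by omega
      rw [h1, h2, h3]; omega
    · have h2 : N + 1 - 1 - c = (N - 1 - c) + 1 := by omega
      rw [h2, T_succ]; omega

lemma sum_range_id' {N : ℕ} (h : 1 ≤ N) : ∑ s ∈ Finset.range N, s = T (N - 1) := by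
  have h2 : N - 1 + 1 = N := by omega
  rw [T, h2]

lemma SL3 {c N : ℕ} (h : 1 ≤ N) :
    ∑ s ∈ Finset.range N, min c s = T (N-1) - T (N-1-c) := by
  have h1 : ∑ s ∈ Finset.range N, min c s + ∑ s ∈ Finset.range N, (s - c)
      = ∑ s ∈ Finset.range N, s := by
    rw [← Finset.sum_add_distrib]
    apply Finset.sum_congr rfl; intro s _; omega
  rw [SL2, sum_range_id' h] at h1
  have := T_mono (show N-1-c ≤ N-1 by omega)
  omega

/-- reflection -/
lemma SL4 (f : ℕ → ℕ) (ν : ℕ) :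
    ∑ j ∈ Finset.Ico 1 ν, f (ν - j) = ∑ j ∈ Finset.Ico 1 ν, f j := by
  apply Finset.sum_nbij' (i := fun j => ν - j) (j := fun s => ν - s) <;>
    (intro a ha; simp only [Finset.mem_Ico] at *; try omega)

lemma ico_to_range (f : ℕ → ℕ) (ν : ℕ) (hf : f 0 = 0) :
    ∑ j ∈ Finset.Ico 1 ν, f j = ∑ j ∈ Finset.range ν, f j := by
  rcases Nat.eq_zero_or_pos ν with h | h
  · subst h; simp
  · rw [Finset.range_eq_Ico, Finset.sum_eq_sum_Ico_succ_bot h, hf, zero_add]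

lemma SI1 {c ν : ℕ} (h : 1 ≤ ν) :
    ∑ j ∈ Finset.Ico 1 ν, min c (ν - j) = T (ν-1) - T (ν-1-c) := by
  rw [SL4 (fun s => min c s) ν, ico_to_range _ _ (by simp), SL3 h]

lemma SI2 {ν m : ℕ} : ∑ j ∈ Finset.Ico 1 ν, (ν - j - m) = T (ν - 1 - m) := by
  rw [SL4 (fun s => s - m) ν, ico_to_range _ _ (by simp), SL2]

lemma SI3 {M m : ℕ} (h : m ≤ M) : ∑ t ∈ Finset.range M, (m - t) = T m := by
  rw [← Finset.sum_subset (Finset.range_subset_range.2 h) (by intro t _ ht; simp at ht; omega)]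
  rw [Finset.range_eq_Ico, SL1 (Nat.zero_le m)]
  simp


/-- the finset of cells of the triangle satisfying a condition -/
def cellF (n : ℕ) (C : ℕ → ℕ → Prop) [∀ i j, Decidable (C i j)] : Finset (ℕ × ℕ) :=
  (Finset.range (n+1) ×ˢ Finset.range (n+1)).filter
    (fun p => 1 ≤ p.2 ∧ p.2 ≤ p.1 ∧ p.1 + 1 ≤ n ∧ C p.1 p.2)

lemma mem_cellF {n : ℕ} {C : ℕ → ℕ → Prop} [∀ i j, Decidable (C i j)] {p : ℕ × ℕ} :
    p ∈ cellF n C ↔ 1 ≤ p.2 ∧ p.2 ≤ p.1 ∧ p.1 + 1 ≤ n ∧ C p.1 p.2 := by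
  unfold cellF
  simp only [Finset.mem_filter, Finset.mem_product, Finset.mem_range]
  constructor
  · rintro ⟨-, h⟩; exact h
  · rintro ⟨h1, h2, h3, h4⟩; exact ⟨⟨by omega, by omega⟩, h1, h2, h3, h4⟩

/-- column decomposition with offset: cells with p.2 + t ≤ p.1 -/
lemma cols_decomp (n t : ℕ) (C : ℕ → ℕ → Prop) [∀ i j, Decidable (C i j)] :
    ((cellF n C).filter (fun p => p.2 + t ≤ p.1)).card
    = ∑ j ∈ Finset.Ico 1 (n - t), ((Finset.Ico (j+t) n).filter (fun i => C i j)).card := by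
  rw [Finset.card_eq_sum_card_fiberwise
    (f := Prod.snd) (t := Finset.Ico 1 (n - t)) ?_]
  · apply Finset.sum_congr rfl
    intro j hj
    simp only [Finset.mem_Ico] at hj
    apply Finset.card_nbij' (i := Prod.fst) (j := fun i => (i, j))
    · intro p hp
      simp only [Finset.mem_coe, Finset.mem_filter, mem_cellF, Finset.mem_Ico] at hp ⊢
      obtain ⟨⟨⟨h1, h2, h3, h4⟩, h5⟩, h6⟩ := hp
      subst h6
      exact ⟨⟨by omega, by omega⟩, h4⟩
    · intro i hi
      simp only [Finset.mem_coe, Finset.mem_filter, mem_cellF, Finset.mem_Ico] at hi ⊢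
      obtain ⟨⟨h1, h2⟩, h3⟩ := hi
      exact ⟨⟨⟨by omega, by omega, by omega, h3⟩, by omega⟩, by trivial⟩
    · intro p hp
      simp only [Finset.mem_coe, Finset.mem_filter] at hp
      exact Prod.ext rfl hp.2.symm
    · intro i _; rfl
  · intro p hp
    simp only [Finset.mem_coe, Finset.mem_filter, mem_cellF] at hp
    simp only [Finset.mem_coe, Finset.mem_Ico]
    omega

lemma cols_decomp0 (n : ℕ) (C : ℕ → ℕ → Prop) [∀ i j, Decidable (C i j)] :
    (cellF n C).card
    = ∑ j ∈ Finset.Ico 1 n, ((Finset.Ico j n).filter (fun i => C i j)).card := by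
  have h := cols_decomp n 0 C
  rw [Finset.filter_true_of_mem (fun p hp => by rw [mem_cellF] at hp; omega)] at h
  simpa using h

lemma cols_le (n t : ℕ) (C : ℕ → ℕ → Prop) [∀ i j, Decidable (C i j)] :
    ∑ j ∈ Finset.Ico 1 (n - t), ((Finset.Ico (j+t) n).filter (fun i => C i j)).card
    ≤ (cellF n C).card := by
  rw [← cols_decomp]
  exact Finset.card_le_card (Finset.filter_subset _ _)

/-- diagonal decomposition -/
lemma diag_decomp (n : ℕ) (C : ℕ → ℕ → Prop) [∀ i j, Decidable (C i j)] :
    (cellF n C).card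
    = ∑ t ∈ Finset.range (n-1), ((Finset.Ico (t+1) n).filter (fun i => C i (i - t))).card := by
  rw [Finset.card_eq_sum_card_fiberwise
    (f := fun p => p.1 - p.2) (t := Finset.range (n-1)) ?_]
  · apply Finset.sum_congr rfl
    intro t ht
    simp only [Finset.mem_range] at ht
    apply Finset.card_nbij' (i := Prod.fst) (j := fun i => (i, i - t))
    · intro p hp
      simp only [Finset.mem_coe, Finset.mem_filter, mem_cellF, Finset.mem_Ico] at hp ⊢
      obtain ⟨⟨h1, h2, h3, h4⟩, h5⟩ := hp
      have : p.2 = p.1 - t := by omega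
      rw [← this]
      exact ⟨⟨by omega, by omega⟩, h4⟩
    · intro i hi
      simp only [Finset.mem_coe, Finset.mem_filter, mem_cellF, Finset.mem_Ico] at hi ⊢
      obtain ⟨⟨h1, h2⟩, h3⟩ := hi
      exact ⟨⟨by omega, by omega, by omega, h3⟩, by omega⟩
    · intro p hp
      simp only [Finset.mem_coe, Finset.mem_filter, mem_cellF] at hp
      obtain ⟨⟨h1, h2, h3, h4⟩, h5⟩ := hp
      exact Prod.ext rfl (by dsimp only; omega)
    · intro i _; rfl
  · intro p hp
    simp only [Finset.mem_coe, mem_cellF] at hp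
    simp only [Finset.mem_coe, Finset.mem_range]
    omega

section GogFacts

variable {n : ℕ} {X : ℕ → ℕ → ℤ} (hg : IsGog n X)

include hg

lemma X_top {j : ℕ} (h1 : 1 ≤ j) (h2 : j ≤ n) : X n j = (j : ℤ) := hg.2.2 j h1 h2

lemma X_down {i j : ℕ} (h1 : 1 ≤ j) (h2 : j ≤ i) (h3 : i + 1 ≤ n) :
    X (i+1) j ≤ X i j := (hg.1.2 i j h1 h2 h3).1

lemma X_upright {i j : ℕ} (h1 : 1 ≤ j) (h2 : j ≤ i) (h3 : i + 1 ≤ n) :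
    X i j ≤ X (i+1) (j+1) := (hg.1.2 i j h1 h2 h3).2

lemma X_ge {i j : ℕ} (h1 : 1 ≤ j) (h2 : j ≤ i) (h3 : i ≤ n) : (j : ℤ) ≤ X i j := by
  induction j with
  | zero => exact absurd h1 (by omega)
  | succ j ih =>
    rcases Nat.eq_zero_or_pos j with h | h
    · subst h; exact hg.1.1 i 1 le_rfl h2 h3
    · have hlt := hg.2.1 i j h (by omega) h3
      have := ih h (by omega)
      push_cast
      omega

lemma X_le {i j : ℕ} (h1 : 1 ≤ j) (h2 : j ≤ i) (h3 : i ≤ n) :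
    X i j ≤ (j : ℤ) + ((n - i : ℕ) : ℤ) := by
  obtain ⟨s, hs⟩ : ∃ s, i + s = n := ⟨n - i, by omega⟩
  have hni : n - i = s := by omega
  rw [hni]
  clear hni h3
  induction s generalizing i j with
  | zero =>
    have : i = n := by omega
    subst this
    rw [X_top hg h1 h2]
    simp
  | succ s ih =>
    have h4 := X_upright hg h1 h2 (by omega)
    have h5 := ih (j := j+1) (i := i+1) (by omega) (by omega) (by omega)
    push_cast at h5 ⊢
    omega

end GogFacts


section TeleLemmas
variable {n : ℕ} {X : ℕ → ℕ → ℤ} (hg : IsGog n X)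
include hg

lemma colLower {j a : ℕ} (h1 : 1 ≤ j) (hja : j ≤ a) (han : a ≤ n) :
    ((n - a : ℕ) : ℤ) - (((Finset.Ico a n).filter (fun i => X i j = X (i+1) j)).card : ℤ)
      ≤ X a j - (j : ℤ) := by
  have htel := tele (fun i => X i j) han
  have htop : X n j = (j:ℤ) := X_top hg h1 (le_trans hja han)
  have hpt : ∀ i ∈ Finset.Ico a n,
      (if X i j = X (i+1) j then (0:ℤ) else 1) ≤ X i j - X (i+1) j := by
    intro i hi; simp only [Finset.mem_Ico] at hi
    have hd := X_down hg (i := i) (j := j) h1 (by omega) (by omega)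
    by_cases h : X i j = X (i+1) j
    · simp [h]
    · simp only [if_neg h]; omega
  have hsum := Finset.sum_le_sum hpt
  rw [card_ite0, htel, htop, Nat.card_Ico] at hsum
  exact hsum

lemma diagUpper {t i : ℕ} (ht : t + 1 ≤ i) (hin : i ≤ n) :
    X i (i - t) - ((i - t : ℕ) : ℤ)
      ≤ (((Finset.Ico i n).filter
          (fun i' => X i' (i' - t) = X (i'+1) ((i' - t)+1))).card : ℤ) := by
  have htel := tele (fun i' => X i' (i' - t) - ((i' - t : ℕ) : ℤ)) hin
  have htop : X n (n - t) = ((n - t : ℕ) : ℤ) := X_top hg (by omega) (by omega)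
  have hpt : ∀ i' ∈ Finset.Ico i n,
      (X i' (i' - t) - ((i' - t : ℕ) : ℤ)) - (X (i'+1) ((i'+1) - t) - (((i'+1) - t : ℕ) : ℤ))
      ≤ (if X i' (i' - t) = X (i'+1) ((i' - t)+1) then (1:ℤ) else 0) := by
    intro i' hi'; simp only [Finset.mem_Ico] at hi'
    have hur := X_upright hg (i := i') (j := i' - t) (by omega) (by omega) (by omega)
    have hcast : (((i'+1) - t : ℕ) : ℤ) = ((i' - t : ℕ) : ℤ) + 1 := by omega
    have hidx : (i'+1) - t = (i' - t) + 1 := by omega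
    rw [hcast, hidx]
    by_cases h : X i' (i' - t) = X (i'+1) ((i' - t)+1)
    · simp [h]
    · simp only [if_neg h]; omega
  have hsum := Finset.sum_le_sum hpt
  rw [htel, card_ite1, htop] at hsum
  omega

end TeleLemmas

theorem gog_unique {n k m : ℕ} {X : ℕ → ℕ → ℤ} (hg : IsGog n X) (hkm : k + m + 1 = n)
    (hP : (cellF n (fun i j => X i j = X (i+1) j)).card = T k)
    (hQ : (cellF n (fun i j => X i j = X (i+1) (j+1))).card = T m) :
    ∀ i j, 1 ≤ j → j ≤ i → i ≤ n →
      X i j = (j:ℤ) + max 0 (min ((j:ℤ) + (m:ℤ) - (i:ℤ)) ((n:ℤ) - (i:ℤ))) := by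
  -- ===== Step 1 : coinversions on diagonal t are at least m - t =====
  have step1 : ∀ t, t + 1 < n →
      m - t ≤ ((Finset.Ico (t+1) n).filter
        (fun i => X i (i-t) = X (i+1) ((i-t)+1))).card := by
    intro t ht
    set c := ((Finset.Ico (t+1) n).filter
      (fun i => X i (i-t) = X (i+1) ((i-t)+1))).card with hc
    have hup : ∀ j ∈ Finset.Ico 1 (n - t),
        X (j+t) j - (j:ℤ) ≤ ((min c (n - (j+t)) : ℕ) : ℤ) := by
      intro j hj; simp only [Finset.mem_Ico] at hj
      have h1 := diagUpper hg (t := t) (i := j + t) (by omega) (by omega)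
      rw [show j + t - t = j from by omega] at h1
      have h2 : ((Finset.Ico (j+t) n).filter
          (fun i' => X i' (i'-t) = X (i'+1) ((i'-t)+1))).card ≤ c := by
        rw [hc]
        exact Finset.card_le_card
          (Finset.filter_subset_filter _ (Finset.Ico_subset_Ico (by omega) le_rfl))
      have h3 : ((Finset.Ico (j+t) n).filter
          (fun i' => X i' (i'-t) = X (i'+1) ((i'-t)+1))).card ≤ n - (j + t) :=
        le_trans (Finset.card_filter_le _ _) (le_of_eq (Nat.card_Ico _ _))
      have h4 : ((Finset.Ico (j+t) n).filter
          (fun i' => X i' (i'-t) = X (i'+1) ((i'-t)+1))).card ≤ min c (n - (j+t)) :=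
        le_min h2 h3
      have h5 : (((Finset.Ico (j+t) n).filter
          (fun i' => X i' (i'-t) = X (i'+1) ((i'-t)+1))).card : ℤ)
          ≤ ((min c (n - (j+t)) : ℕ) : ℤ) := by exact_mod_cast h4
      linarith
    have hlow : ∀ j ∈ Finset.Ico 1 (n - t),
        ((n - (j+t) : ℕ) : ℤ)
          - (((Finset.Ico (j+t) n).filter (fun i => X i j = X (i+1) j)).card : ℤ)
        ≤ X (j+t) j - (j:ℤ) := by
      intro j hj; simp only [Finset.mem_Ico] at hj
      exact colLower hg (by omega) (by omega) (by omega)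
    have hs1 := Finset.sum_le_sum hlow
    have hs2 := Finset.sum_le_sum hup
    rw [Finset.sum_sub_distrib] at hs1
    have e1 : ∑ j ∈ Finset.Ico 1 (n-t), ((n - (j+t) : ℕ):ℤ)
        = ((T (n - t - 1) : ℕ) : ℤ) := by
      rw [← Nat.cast_sum]
      congr 1
      rw [show (∑ j ∈ Finset.Ico 1 (n-t), (n - (j+t)))
          = ∑ j ∈ Finset.Ico 1 (n-t), ((n-t) - j) from
        Finset.sum_congr rfl (fun j hj => by
          simp only [Finset.mem_Ico] at hj; omega)]
      exact SL1 (by omega)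
    have hT1 : T (n-t-1-c) ≤ T (n-t-1) := T_mono (by omega)
    have e2 : ∑ j ∈ Finset.Ico 1 (n-t), ((min c (n - (j+t)) : ℕ) : ℤ)
        = ((T (n-t-1) : ℕ) : ℤ) - ((T (n-t-1-c) : ℕ) : ℤ) := by
      rw [← Nat.cast_sum]
      rw [show (∑ j ∈ Finset.Ico 1 (n-t), min c (n - (j+t)))
          = ∑ j ∈ Finset.Ico 1 (n-t), min c ((n-t) - j) from
        Finset.sum_congr rfl (fun j hj => by
          simp only [Finset.mem_Ico] at hj; omega)]
      rw [SI1 (by omega)]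
      omega
    have e3 : ∑ j ∈ Finset.Ico 1 (n-t),
        (((Finset.Ico (j+t) n).filter (fun i => X i j = X (i+1) j)).card : ℤ)
        ≤ ((T k : ℕ) : ℤ) := by
      rw [← Nat.cast_sum]
      have := le_trans (cols_le n t (fun i j => X i j = X (i+1) j)) (le_of_eq hP)
      exact_mod_cast this
    rw [e1] at hs1
    rw [e2] at hs2
    have hTk : ((T (n-t-1-c) : ℕ) : ℤ) ≤ ((T k : ℕ) : ℤ) := by linarith
    have := T_le (by exact_mod_cast hTk)
    omega
  -- ===== Step 2 : coinversions per diagonal are exactly m - t =====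
  have hQd : ∑ t ∈ Finset.range (n-1),
      ((Finset.Ico (t+1) n).filter (fun i => X i (i-t) = X (i+1) ((i-t)+1))).card = T m := by
    rw [← hQ]
    exact (diag_decomp n (fun i j => X i j = X (i+1) (j+1))).symm
  have hcd : ∀ t ∈ Finset.range (n-1),
      ((Finset.Ico (t+1) n).filter (fun i => X i (i-t) = X (i+1) ((i-t)+1))).card
        = m - t := by
    have hle : ∀ t ∈ Finset.range (n-1), m - t ≤
        ((Finset.Ico (t+1) n).filter (fun i => X i (i-t) = X (i+1) ((i-t)+1))).card := by
      intro t ht; simp only [Finset.mem_range] at ht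
      exact step1 t (by omega)
    have hsum : ∑ t ∈ Finset.range (n-1), (m - t) = T m := SI3 (by omega)
    intro t ht
    exact ((Finset.sum_eq_sum_iff_of_le hle).mp (by rw [hQd, hsum]) t ht).symm
  -- ===== Step 3 : column counts and diagonal values =====
  have hPd : ∑ j ∈ Finset.Ico 1 n,
      ((Finset.Ico j n).filter (fun i => X i j = X (i+1) j)).card = T k := by
    rw [← hP]
    exact (cols_decomp0 n (fun i j => X i j = X (i+1) j)).symm
  have hAup : ∀ j ∈ Finset.Ico 1 n, X j j - (j:ℤ) ≤ ((min m (n - j) : ℕ) : ℤ) := by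
    intro j hj; simp only [Finset.mem_Ico] at hj
    have h1 := diagUpper hg (t := 0) (i := j) (by omega) (by omega)
    rw [show j - 0 = j from rfl] at h1
    have h0 := hcd 0 (by simp only [Finset.mem_range]; omega)
    have h2 : ((Finset.Ico j n).filter (fun i' => X i' (i'-0) = X (i'+1) ((i'-0)+1))).card
        ≤ ((Finset.Ico (0+1) n).filter (fun i => X i (i-0) = X (i+1) ((i-0)+1))).card :=
      Finset.card_le_card
        (Finset.filter_subset_filter _ (Finset.Ico_subset_Ico (by omega) le_rfl))
    have h3 : ((Finset.Ico j n).filter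
        (fun i' => X i' (i'-0) = X (i'+1) ((i'-0)+1))).card ≤ n - j :=
      le_trans (Finset.card_filter_le _ _) (le_of_eq (Nat.card_Ico _ _))
    have h4 : (((Finset.Ico j n).filter
        (fun i' => X i' (i'-0) = X (i'+1) ((i'-0)+1))).card : ℤ)
        ≤ ((min m (n-j) : ℕ) : ℤ) := by omega
    linarith
  have hicol_ge : ∀ j ∈ Finset.Ico 1 n,
      (n - j) - m ≤ ((Finset.Ico j n).filter (fun i => X i j = X (i+1) j)).card := by
    intro j hj
    have hj' := hj; simp only [Finset.mem_Ico] at hj'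
    have hcl := colLower hg (j := j) (a := j) (by omega) le_rfl (by omega)
    have := le_trans hcl (hAup j hj)
    omega
  have hsumlow : ∑ j ∈ Finset.Ico 1 n, (n - j - m) = T k := by
    rw [SI2, show n - 1 - m = k from by omega]
  have hicol : ∀ j ∈ Finset.Ico 1 n,
      ((Finset.Ico j n).filter (fun i => X i j = X (i+1) j)).card = (n - j) - m := by
    intro j hj
    exact ((Finset.sum_eq_sum_iff_of_le hicol_ge).mp (by rw [hPd, hsumlow]) j hj).symm
  have hXjj : ∀ j ∈ Finset.Ico 1 n, X j j = (j:ℤ) + ((min m (n-j) : ℕ) : ℤ) := by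
    intro j hj
    have hj' := hj; simp only [Finset.mem_Ico] at hj'
    have hcl := colLower hg (j := j) (a := j) (by omega) le_rfl (by omega)
    rw [hicol j hj] at hcl
    have hau := hAup j hj
    omega
  -- ===== Step 4 : all column steps are 0 or 1 =====
  have hvert : ∀ j i, 1 ≤ j → j ≤ i → i + 1 ≤ n → X i j ≤ X (i+1) j + 1 := by
    intro j i h1 h2 h3
    have hj' : j ∈ Finset.Ico 1 n := by simp only [Finset.mem_Ico]; omega
    have htel := tele (fun i' => X i' j) (show j ≤ n by omega)
    rw [X_top hg h1 (by omega)] at htel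
    have hpt : ∀ i' ∈ Finset.Ico j n,
        (if X i' j = X (i'+1) j then (0:ℤ) else 1) ≤ X i' j - X (i'+1) j := by
      intro i' hi'; simp only [Finset.mem_Ico] at hi'
      have hd := X_down hg (i := i') (j := j) h1 (by omega) (by omega)
      by_cases h : X i' j = X (i'+1) j
      · simp [h]
      · simp only [if_neg h]; omega
    have hsums : ∑ i' ∈ Finset.Ico j n, (if X i' j = X (i'+1) j then (0:ℤ) else 1)
        = ∑ i' ∈ Finset.Ico j n, (X i' j - X (i'+1) j) := by
      rw [card_ite0, htel, Nat.card_Ico, hXjj j hj', hicol j hj']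
      omega
    have heq := (Finset.sum_eq_sum_iff_of_le hpt).mp hsums
    have h5 := heq i (by simp only [Finset.mem_Ico]; omega)
    by_cases h : X i j = X (i+1) j
    · omega
    · rw [if_neg h] at h5; omega
  -- ===== Step 5 : going down a column loses at most 1 per row =====
  have hcolstep : ∀ j, 1 ≤ j → ∀ s, j + s ≤ n → X j j ≤ X (j+s) j + (s:ℤ) := by
    intro j h1 s
    induction s with
    | zero => intro _; simp
    | succ s ih =>
      intro h2
      have ha := ih (by omega)
      have hb := hvert j (j+s) h1 (by omega) (by omega)
      rw [show j + (s+1) = (j+s)+1 from by omega]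
      push_cast
      push_cast at ha
      omega
  -- ===== Step 6 : first column values =====
  have hcol1 : ∀ j, 1 ≤ j → j ≤ n → X j 1 = 1 + ((m - (j-1) : ℕ) : ℤ) := by
    intro j h1 h2
    rcases eq_or_lt_of_le h2 with rfl | hlt
    · rw [X_top hg le_rfl (by omega), show m - (j-1) = 0 from by omega]
      simp
    · have h1u := diagUpper hg (t := j-1) (i := j) (by omega) (by omega)
      rw [show j - (j-1) = 1 from by omega] at h1u
      rw [show Finset.Ico j n = Finset.Ico ((j-1)+1) n from by rw [show (j-1)+1 = j from by omega]] at h1u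
      rw [hcd (j-1) (by simp only [Finset.mem_range]; omega)] at h1u
      have h1l := colLower hg (j := 1) (a := j) le_rfl (by omega) (by omega)
      have hsub : ((Finset.Ico j n).filter (fun i => X i 1 = X (i+1) 1)).card
          ≤ ((Finset.Ico 1 n).filter (fun i => X i 1 = X (i+1) 1)).card :=
        Finset.card_le_card
          (Finset.filter_subset_filter _ (Finset.Ico_subset_Ico h1 le_rfl))
      have hic1 := hicol 1 (by simp only [Finset.mem_Ico]; omega)
      have hcard2 : ((Finset.Ico j n).filter (fun i => X i 1 = X (i+1) 1)).card ≤ n - j :=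
        le_trans (Finset.card_filter_le _ _) (le_of_eq (Nat.card_Ico _ _))
      omega
  -- ===== Step 7 : all diagonal steps are 0 or 1 =====
  have hdiagstep : ∀ i j, 1 ≤ j → j ≤ i → i + 1 ≤ n → X (i+1) (j+1) ≤ X i j + 1 := by
    intro i j h1 h2 h3
    have ht1 : (i - j) + 1 ≤ n := by omega
    have htel := tele (fun i' => X i' (i' - (i-j)) - ((i' - (i-j) : ℕ) : ℤ)) ht1
    rw [show (i-j)+1 - (i-j) = 1 from by omega] at htel
    rw [X_top hg (j := n - (i-j)) (by omega) (by omega)] at htel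
    rw [hcol1 ((i-j)+1) (by omega) (by omega)] at htel
    rw [show (i-j)+1-1 = i-j from by omega] at htel
    have hpt : ∀ i' ∈ Finset.Ico ((i-j)+1) n,
        (X i' (i' - (i-j)) - ((i' - (i-j) : ℕ) : ℤ))
          - (X (i'+1) ((i'+1) - (i-j)) - (((i'+1) - (i-j) : ℕ) : ℤ))
        ≤ (if X i' (i' - (i-j)) = X (i'+1) ((i' - (i-j))+1) then (1:ℤ) else 0) := by
      intro i' hi'; simp only [Finset.mem_Ico] at hi'
      have hur := X_upright hg (i := i') (j := i' - (i-j)) (by omega) (by omega) (by omega)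
      have hcast : (((i'+1) - (i-j) : ℕ) : ℤ) = ((i' - (i-j) : ℕ) : ℤ) + 1 := by omega
      have hidx : (i'+1) - (i-j) = (i' - (i-j)) + 1 := by omega
      rw [hcast, hidx]
      by_cases h : X i' (i' - (i-j)) = X (i'+1) ((i' - (i-j))+1)
      · simp [h]
      · simp only [if_neg h]; omega
    have hsums : ∑ i' ∈ Finset.Ico ((i-j)+1) n,
        ((X i' (i' - (i-j)) - ((i' - (i-j) : ℕ) : ℤ))
          - (X (i'+1) ((i'+1) - (i-j)) - (((i'+1) - (i-j) : ℕ) : ℤ)))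
        = ∑ i' ∈ Finset.Ico ((i-j)+1) n,
          (if X i' (i' - (i-j)) = X (i'+1) ((i' - (i-j))+1) then (1:ℤ) else 0) := by
      rw [htel, card_ite1, hcd (i-j) (by simp only [Finset.mem_range]; omega)]
      omega
    have heq := (Finset.sum_eq_sum_iff_of_le hpt).mp hsums
    have h5 := heq i (by simp only [Finset.mem_Ico]; omega)
    rw [show i - (i-j) = j from by omega, show (i+1) - (i-j) = j+1 from by omega] at h5
    by_cases h : X i j = X (i+1) (j+1)
    · omega
    · rw [if_neg h] at h5
      have hc1 : ((j+1 : ℕ) : ℤ) = (j:ℤ) + 1 := by omega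
      omega
  -- ===== Step 8 : iterate diagonal steps up-left to column 1 =====
  have hupleft : ∀ s i j, 1 ≤ j → j ≤ i → i ≤ n → s ≤ j - 1 →
      X i j ≤ X (i-s) (j-s) + (s:ℤ) := by
    intro s
    induction s with
    | zero => intro i j _ _ _ _; simp
    | succ s ih =>
      intro i j h1 h2 h3 hs
      have ha := ih i j h1 h2 h3 (by omega)
      have hb := hdiagstep (i-s-1) (j-s-1) (by omega) (by omega) (by omega)
      rw [show i-s-1+1 = i-s from by omega, show j-s-1+1 = j-s from by omega] at hb
      rw [show i - (s+1) = i-s-1 from by omega, show j - (s+1) = j-s-1 from by omega]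
      push_cast at ha ⊢
      omega
  -- ===== Final squeeze =====
  intro i j h1 h2 h3
  rcases eq_or_lt_of_le (show j ≤ n by omega) with rfl | hjn
  · have hij : i = j := by omega
    subst hij
    rw [X_top hg h1 le_rfl]
    omega
  · have hu1 := hupleft (j-1) i j h1 h2 h3 le_rfl
    rw [show j - (j-1) = 1 from by omega] at hu1
    rw [hcol1 (i-(j-1)) (by omega) (by omega)] at hu1
    rw [show i-(j-1)-1 = i-j from by omega] at hu1
    have hu2 := X_le hg h1 h2 h3
    have hl1 := X_ge hg h1 h2 h3
    have hXjj' := hXjj j (by simp only [Finset.mem_Ico]; omega)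
    have hl2 := hcolstep j h1 (i - j) (by omega)
    rw [show j + (i-j) = i from by omega] at hl2
    rw [hXjj'] at hl2
    omega


/-- the target triangle -/
def Xt (n m : ℕ) : ℕ → ℕ → ℤ := fun i j =>
  if 1 ≤ j ∧ j ≤ i ∧ i ≤ n then
    (j:ℤ) + max 0 (min ((j:ℤ) + (m:ℤ) - (i:ℤ)) ((n:ℤ) - (i:ℤ)))
  else 0

lemma Xt_isGog {n m : ℕ} : IsGog n (Xt n m) := by
  refine ⟨⟨?_, ?_⟩, ?_, ?_⟩
  · intro i j h1 h2 h3
    simp only [Xt]; split_ifs with h <;> omega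
  · intro i j h1 h2 h3
    constructor <;> (simp only [Xt]; split_ifs <;> omega)
  · intro i j h1 h2 h3
    simp only [Xt]; split_ifs <;> omega
  · intro j h1 h2
    simp only [Xt]; split_ifs <;> omega

lemma Xt_norm {n m : ℕ} : ∀ i j, ¬(1 ≤ j ∧ j ≤ i ∧ i ≤ n) → Xt n m i j = 0 := by
  intro i j h; simp only [Xt, if_neg h]

lemma Xt_invF {n k m : ℕ} (hkm : k + m + 1 = n) :
    (cellF n (fun i j => Xt n m i j = Xt n m (i+1) j)).card = T k := by
  rw [cols_decomp0]
  have hcol : ∀ j ∈ Finset.Ico 1 n,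
      ((Finset.Ico j n).filter (fun i => Xt n m i j = Xt n m (i+1) j)).card
      = n - j - m := by
    intro j hj; simp only [Finset.mem_Ico] at hj
    have hfe : (Finset.Ico j n).filter (fun i => Xt n m i j = Xt n m (i+1) j)
        = Finset.Ico (j+m) n := by
      ext i
      simp only [Finset.mem_filter, Finset.mem_Ico]
      constructor
      · rintro ⟨⟨hi1, hi2⟩, heq⟩
        simp only [Xt, if_pos (show 1 ≤ j ∧ j ≤ i ∧ i ≤ n by omega),
          if_pos (show 1 ≤ j ∧ j ≤ i+1 ∧ i+1 ≤ n by omega)] at heq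
        omega
      · rintro ⟨hi1, hi2⟩
        refine ⟨⟨by omega, by omega⟩, ?_⟩
        simp only [Xt, if_pos (show 1 ≤ j ∧ j ≤ i ∧ i ≤ n by omega),
          if_pos (show 1 ≤ j ∧ j ≤ i+1 ∧ i+1 ≤ n by omega)]
        omega
    rw [hfe, Nat.card_Ico]
    omega
  rw [Finset.sum_congr rfl hcol, SI2, show n - 1 - m = k from by omega]

lemma Xt_coinvF {n k m : ℕ} (hkm : k + m + 1 = n) :
    (cellF n (fun i j => Xt n m i j = Xt n m (i+1) (j+1))).card = T m := by
  rw [cols_decomp0]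
  have hcol : ∀ j ∈ Finset.Ico 1 n,
      ((Finset.Ico j n).filter (fun i => Xt n m i j = Xt n m (i+1) (j+1))).card
      = if n ≤ j + m then n - j else 0 := by
    intro j hj; simp only [Finset.mem_Ico] at hj
    by_cases hc : n ≤ j + m
    · rw [if_pos hc]
      rw [Finset.filter_true_of_mem, Nat.card_Ico]
      intro i hi; simp only [Finset.mem_Ico] at hi
      simp only [Xt, if_pos (show 1 ≤ j ∧ j ≤ i ∧ i ≤ n by omega),
        if_pos (show 1 ≤ j+1 ∧ j+1 ≤ i+1 ∧ i+1 ≤ n by omega)]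
      push_cast
      omega
    · rw [if_neg hc]
      rw [Finset.filter_false_of_mem, Finset.card_empty]
      intro i hi; simp only [Finset.mem_Ico] at hi
      simp only [Xt, if_pos (show 1 ≤ j ∧ j ≤ i ∧ i ≤ n by omega),
        if_pos (show 1 ≤ j+1 ∧ j+1 ≤ i+1 ∧ i+1 ≤ n by omega)]
      push_cast
      omega
  rw [Finset.sum_congr rfl hcol]
  rw [← Finset.sum_subset (show Finset.Ico (n-m) n ⊆ Finset.Ico 1 n from
      Finset.Ico_subset_Ico (by omega) le_rfl)
    (by intro j hj hnj; simp only [Finset.mem_Ico] at hj hnj; rw [if_neg (by omega)])]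
  rw [Finset.sum_congr rfl (fun j hj => by
    simp only [Finset.mem_Ico] at hj; rw [if_pos (by omega)])]
  rw [SL1 (by omega), show n - (n - m) = m from by omega]

lemma invCount_eq (n : ℕ) (X : ℕ → ℕ → ℤ) :
    invCount n X = (cellF n (fun i j => X i j = X (i+1) j)).card := by
  unfold invCount
  rw [← Set.ncard_coe_finset]
  congr 1
  ext p
  simp only [Finset.mem_coe, mem_cellF, Set.mem_setOf_eq]

lemma coinvCount_eq (n : ℕ) (X : ℕ → ℕ → ℤ) :
    coinvCount n X = (cellF n (fun i j => X i j = X (i+1) (j+1))).card := by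
  unfold coinvCount
  rw [← Set.ncard_coe_finset]
  congr 1
  ext p
  simp only [Finset.mem_coe, mem_cellF, Set.mem_setOf_eq]

end Gog13

open Gog13

/-- There is exactly one Gog triangle of size `n` with `k(k+1)/2` inversions and
`(n-k-1)(n-k)/2` coinversions (uniqueness stated for triangles normalized to vanish
off the triangular domain), and its bottom entry is `n - k`. -/
theorem stmt13 (n k : ℕ) (hn : 1 ≤ n) (hk : k ≤ n - 1) :
    (∃! X : ℕ → ℕ → ℤ,
      (IsGog n X ∧ ∀ i j, ¬(1 ≤ j ∧ j ≤ i ∧ i ≤ n) → X i j = 0) ∧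
      invCount n X = k * (k + 1) / 2 ∧
      coinvCount n X = (n - k - 1) * (n - k) / 2) ∧
    ∀ X : ℕ → ℕ → ℤ, IsGog n X → invCount n X = k * (k + 1) / 2 →
      coinvCount n X = (n - k - 1) * (n - k) / 2 → X 1 1 = (n : ℤ) - k := by
  set m := n - 1 - k with hmdef
  have hkm : k + m + 1 = n := by omega
  have hTk : k * (k + 1) / 2 = T k := (T_eq k).symm
  have hTm : (n - k - 1) * (n - k) / 2 = T m := by
    rw [T_eq, show n - k - 1 = m from by omega, show n - k = m + 1 from by omega]
  constructor
  · refine ⟨Xt n m, ⟨⟨Xt_isGog, Xt_norm⟩, ?_, ?_⟩, ?_⟩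
    · rw [invCount_eq, Xt_invF hkm, hTk]
    · rw [coinvCount_eq, Xt_coinvF hkm, hTm]
    · intro Y hY
      obtain ⟨⟨hgog, hnorm⟩, hinv, hcoinv⟩ := hY
      funext i j
      by_cases hd : 1 ≤ j ∧ j ≤ i ∧ i ≤ n
      · obtain ⟨d1, d2, d3⟩ := hd
        have hval := gog_unique hgog hkm
          (by rw [← invCount_eq, hinv]; exact hTk)
          (by rw [← coinvCount_eq, hcoinv]; exact hTm) i j d1 d2 d3
        rw [hval]
        simp only [Xt, if_pos (show 1 ≤ j ∧ j ≤ i ∧ i ≤ n from ⟨d1, d2, d3⟩)]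
      · rw [hnorm i j hd]
        simp only [Xt, if_neg hd]
  · intro Y hgog hinv hcoinv
    have hval := gog_unique hgog hkm
      (by rw [← invCount_eq, hinv]; exact hTk)
      (by rw [← coinvCount_eq, hcoinv]; exact hTm) 1 1 le_rfl le_rfl hn
    rw [hval]
    omega
end

section
/- Let n ≥ 1 and 0 ≤ k ≤ n−1. The triangular array X of size n defined by X_{i,j} = j for j ≤ i−n+k, X_{i,j} = n+j−i for j ≥ k+1, and X_{i,j} = n−k+2j−i−1 for i−n+k+1 ≤ j ≤ k, is a Gog triangle of size n with exactly k(k+1)/2 inversions and exactly (n−k−1)(n−k)/2 coinversions, and its bottom entry is X_{1,1} = n−k. -/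
theorem tri (m : ℕ) : Set.ncard {p : ℕ × ℕ | p.1 + p.2 < m} = m * (m + 1) / 2 := by
  have hset : {p : ℕ × ℕ | p.1 + p.2 < m} =
      ↑((Finset.range m).biUnion fun s => Finset.HasAntidiagonal.antidiagonal s) := by
    ext p
    simp [Finset.HasAntidiagonal.mem_antidiagonal]
  rw [hset, Set.ncard_coe_finset, Finset.card_biUnion]
  · simp only [Finset.Nat.card_antidiagonal]
    have h := Finset.sum_range_succ' (fun s => s) m
    rw [Finset.sum_range_id] at h
    simp only [Nat.add_sub_cancel] at h
    have hm : (m + 1) * m = m * (m + 1) := Nat.mul_comm _ _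
    omega
  · intro a _ b _ hab
    simp only [Finset.disjoint_left, Finset.HasAntidiagonal.mem_antidiagonal]
    omega

/-- The explicit "diamond" triangle: `X i j = j` for `j ≤ i - n + k`, `X i j = n + j - i`
for `j ≥ k + 1`, and `X i j = n - k + 2j - i - 1` otherwise, is a Gog triangle of size
`n` with exactly `k(k+1)/2` inversions, exactly `(n-k-1)(n-k)/2` coinversions, and
bottom entry `n - k`. -/
theorem stmt14 (n k : ℕ) (hn : 1 ≤ n) (hk : k ≤ n - 1) (X : ℕ → ℕ → ℤ)
    (hX : ∀ i j, 1 ≤ j → j ≤ i → i ≤ n → X i j =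
      if (j : ℤ) ≤ (i : ℤ) - n + k then (j : ℤ)
      else if (k : ℤ) + 1 ≤ (j : ℤ) then (n : ℤ) + j - i
      else (n : ℤ) - k + 2 * j - i - 1) :
    IsGog n X ∧ invCount n X = k * (k + 1) / 2 ∧
      coinvCount n X = (n - k - 1) * (n - k) / 2 ∧ X 1 1 = (n : ℤ) - k := by

  have hkn : k ≤ n - 1 := hk
  refine ⟨⟨⟨?_, ?_⟩, ?_, ?_⟩, ?_, ?_, ?_⟩
  · -- positivity
    intro i j h1 h2 h3
    rw [hX i j h1 h2 h3]
    split_ifs <;> push_cast <;> omega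
  · -- GT inequalities
    intro i j h1 h2 h3
    rw [hX i j h1 h2 (by omega), hX (i+1) j h1 (by omega) h3,
      hX (i+1) (j+1) (by omega) (by omega) h3]
    constructor <;> (split_ifs <;> push_cast <;> omega)
  · -- strict rows
    intro i j h1 h2 h3
    rw [hX i j h1 (by omega) h3, hX i (j+1) (by omega) h2 h3]
    split_ifs <;> push_cast <;> omega
  · -- top row
    intro j h1 h2
    rw [hX n j h1 h2 le_rfl]
    split_ifs <;> push_cast <;> omega
  · -- inversions
    have hchar : ∀ i j : ℕ, 1 ≤ j → j ≤ i → i + 1 ≤ n →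
        (X i j = X (i+1) j ↔ j + n ≤ i + 1 + k) := by
      intro i j h1 h2 h3
      rw [hX i j h1 h2 (by omega), hX (i+1) j h1 (by omega) h3]
      split_ifs <;> push_cast <;> omega
    have hset : {p : ℕ × ℕ | 1 ≤ p.2 ∧ p.2 ≤ p.1 ∧ p.1 + 1 ≤ n ∧ X p.1 p.2 = X (p.1+1) p.2}
        = (fun p : ℕ × ℕ => (n - 1 - p.1, p.2 + 1)) '' {p : ℕ × ℕ | p.1 + p.2 < k} := by
      ext ⟨i, j⟩
      simp only [Set.mem_setOf_eq, Set.mem_image, Prod.mk.injEq, Prod.exists]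
      constructor
      · rintro ⟨h1, h2, h3, h4⟩
        rw [hchar i j h1 h2 h3] at h4
        exact ⟨n - 1 - i, j - 1, by omega, by omega, by omega⟩
      · rintro ⟨a, b, hab, rfl, rfl⟩
        have h1 : 1 ≤ b + 1 := by omega
        have h2 : b + 1 ≤ n - 1 - a := by omega
        have h3 : (n - 1 - a) + 1 ≤ n := by omega
        exact ⟨h1, h2, h3, (hchar _ _ h1 h2 h3).2 (by omega)⟩
    rw [invCount, hset, Set.ncard_image_of_injOn, tri]
    intro p hp q hq hpq
    simp only [Set.mem_setOf_eq] at hp hq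
    simp only [Prod.mk.injEq] at hpq
    obtain ⟨e1, e2⟩ := hpq
    ext <;> omega
  · -- coinversions
    have hchar : ∀ i j : ℕ, 1 ≤ j → j ≤ i → i + 1 ≤ n →
        (X i j = X (i+1) (j+1) ↔ k + 1 ≤ j) := by
      intro i j h1 h2 h3
      rw [hX i j h1 h2 (by omega), hX (i+1) (j+1) (by omega) (by omega) h3]
      split_ifs <;> push_cast <;> omega
    have hset : {p : ℕ × ℕ | 1 ≤ p.2 ∧ p.2 ≤ p.1 ∧ p.1 + 1 ≤ n ∧ X p.1 p.2 = X (p.1+1) (p.2+1)}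
        = (fun p : ℕ × ℕ => (n - 1 - p.1, p.2 + k + 1)) '' {p : ℕ × ℕ | p.1 + p.2 < n - 1 - k} := by
      ext ⟨i, j⟩
      simp only [Set.mem_setOf_eq, Set.mem_image, Prod.mk.injEq, Prod.exists]
      constructor
      · rintro ⟨h1, h2, h3, h4⟩
        rw [hchar i j h1 h2 h3] at h4
        exact ⟨n - 1 - i, j - k - 1, by omega, by omega, by omega⟩
      · rintro ⟨a, b, hab, rfl, rfl⟩
        have h1 : 1 ≤ b + k + 1 := by omega
        have h2 : b + k + 1 ≤ n - 1 - a := by omega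
        have h3 : (n - 1 - a) + 1 ≤ n := by omega
        exact ⟨h1, h2, h3, (hchar _ _ h1 h2 h3).2 (by omega)⟩
    rw [coinvCount, hset, Set.ncard_image_of_injOn, tri]
    · have h1 : n - 1 - k = n - k - 1 := by omega
      have h2 : n - k - 1 + 1 = n - k := by omega
      rw [h1, h2]
    · intro p hp q hq hpq
      simp only [Set.mem_setOf_eq] at hp hq
      simp only [Prod.mk.injEq] at hpq
      obtain ⟨e1, e2⟩ := hpq
      ext <;> omega
  · -- bottom entry
    rw [hX 1 1 le_rfl le_rfl hn]
    split_ifs <;> push_cast <;> omega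
end
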